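/- arXiv:2506.04092 — 2 statements merged into one kernel-verified Lean document; each statement's English description precedes it below -/
import Mathlib

section
/- For every pre-selection function σ, ℳ_order is a mechanism — on every IKEP instance I = ⟨G,V,Γ⟩ it returns, with probability 1, a Γ-cycle packing of G — and it satisfies both individual rationality (U_i(ℳ_order(I)) ≥ nat_i(I) for every instance I and every country i) and incentive compatibility (U_i(ℳ_order(⟨G,V,Γ⟩)) ≥ U_i(ℳ_order(⟨G,V,Γ'⟩)) for every instance ⟨G,V,Γ⟩, every country i, and every Γ' ≤_i Γ). -/
open scoped Classical

/-- An `n`-partitioned compatibility graph: a finite directed graph on a finite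
set of natural-number vertices, without self-loops, whose vertex set is
partitioned into `n` nonempty countries. -/
structure PartGraph (n : ℕ) where
  verts : Finset ℕ
  arcs : Finset (ℕ × ℕ)
  arcs_mem : ∀ p ∈ arcs, p.1 ∈ verts ∧ p.2 ∈ verts
  no_loops : ∀ v, (v, v) ∉ arcs
  country : ℕ → Fin n
  country_nonempty : ∀ i : Fin n, ∃ v ∈ verts, country v = i

/-- Cyclic access to the entries of a list. -/
def cyc (l : List ℕ) (k : ℕ) : ℕ := l.getD (k % l.length) 0

/-- `l` is a (directed) cycle of `G`: a cyclic sequence of at least two distinct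
vertices, consecutive ones (cyclically) joined by arcs. -/
def IsCycle {n : ℕ} (G : PartGraph n) (l : List ℕ) : Prop :=
  2 ≤ l.length ∧ l.Nodup ∧ (∀ v ∈ l, v ∈ G.verts) ∧
    ∀ k < l.length, (cyc l k, cyc l (k + 1)) ∈ G.arcs

/-- All vertices of `l` belong to country `i`. -/
def IsNationalTo {n : ℕ} (G : PartGraph n) (l : List ℕ) (i : Fin n) : Prop :=
  ∀ v ∈ l, G.country v = i

/-- A national cycle: all vertices in one country. -/
def IsNational {n : ℕ} (G : PartGraph n) (l : List ℕ) : Prop :=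
  ∃ i, IsNationalTo G l i

/-- An international cycle: not national (equivalently, for cycles, it contains
an international arc). -/
def IsInternational {n : ℕ} (G : PartGraph n) (l : List ℕ) : Prop :=
  ¬ IsNational G l

/-- Position `k` (taken cyclically) is the start of a `V_i`-segment of `l`:
the vertex there is in country `i` but the cyclically preceding one is not. -/
def segStart {n : ℕ} (G : PartGraph n) (l : List ℕ) (i : Fin n) (k : ℕ) : Prop :=
  G.country (cyc l k) = i ∧ G.country (cyc l (k + l.length - 1)) ≠ i

/-- The size of the run of consecutive (cyclic) positions of `l`, starting at
position `k`, whose vertices are in country `i`.  At a segment start this is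
exactly the size of that `V_i`-segment. -/
noncomputable def runLen {n : ℕ} (G : PartGraph n) (l : List ℕ) (i : Fin n) (k : ℕ) : ℕ :=
  ((Finset.range l.length).filter
    fun j => ∀ j' ≤ j, G.country (cyc l (k + j')) = i).card

/-- The number of `V_i`-segments of the cycle `l`. -/
noncomputable def numSegs {n : ℕ} (G : PartGraph n) (l : List ℕ) (i : Fin n) : ℕ :=
  ((Finset.range l.length).filter fun k => segStart G l i k).card

/-- A set `Γ` of country-specific parameters for `n` countries. -/
structure Params (n : ℕ) where
  icl : ℕ∞
  ncl : Fin n → ℕ∞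
  iss : Fin n → ℕ∞
  isn : Fin n → ℕ∞
  icl_ne_one : icl ≠ 1
  ncl_ne_one : ∀ i, ncl i ≠ 1
  iss_pos : ∀ i, 1 ≤ iss i
  isn_pos : ∀ i, 1 ≤ isn i

/-- `l` is a `Γ`-cycle of `(G, 𝒱)`. -/
def IsGammaCycle {n : ℕ} (G : PartGraph n) (Γ : Params n) (l : List ℕ) : Prop :=
  IsCycle G l ∧
    ((∃ i, IsNationalTo G l i ∧ (l.length : ℕ∞) ≤ Γ.ncl i) ∨
      (IsInternational G l ∧ (l.length : ℕ∞) ≤ Γ.icl ∧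
        (∀ i, ∀ k < l.length, segStart G l i k → (runLen G l i k : ℕ∞) ≤ Γ.iss i) ∧
        (∀ i, (numSegs G l i : ℕ∞) ≤ Γ.isn i)))

/-- A cycle packing of `G`: a set of pairwise vertex-disjoint cycles. -/
def IsPacking {n : ℕ} (G : PartGraph n) (P : Finset (List ℕ)) : Prop :=
  (∀ l ∈ P, IsCycle G l) ∧
    ∀ l ∈ P, ∀ l' ∈ P, l ≠ l' → ∀ v ∈ l, v ∉ l'

/-- The size of a cycle packing: total number of arcs (= vertices) of its cycles. -/
def packSize (P : Finset (List ℕ)) : ℕ := ∑ l ∈ P, l.length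

/-- A `Γ`-cycle packing of `(G, 𝒱)`. -/
def IsGammaPackingG {n : ℕ} (G : PartGraph n) (Γ : Params n) (P : Finset (List ℕ)) : Prop :=
  IsPacking G P ∧ ∀ l ∈ P, IsGammaCycle G Γ l


/-- An IKEP instance `I = ⟨G, 𝒱, Γ⟩`. -/
structure IKEP where
  n : ℕ
  npos : 1 ≤ n
  G : PartGraph n
  prm : Params n

/-- A `Γ`-cycle packing of the instance `I`. -/
def IsGammaPacking (I : IKEP) (P : Finset (List ℕ)) : Prop :=
  IsGammaPackingG I.G I.prm P

/-- The utility `u_i(C)` of country `i` from the cycle `C`: the number of arcs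
of `C` entering country `i`, i.e. the number of vertices of `C` in country `i`. -/
noncomputable def cycUtil {n : ℕ} (G : PartGraph n) (i : Fin n) (l : List ℕ) : ℕ :=
  (l.filter fun v => G.country v = i).length

/-- The utility `u_i(𝒞)` of country `i` from a cycle packing. -/
noncomputable def packUtil {n : ℕ} (G : PartGraph n) (i : Fin n) (P : Finset (List ℕ)) : ℕ :=
  ∑ l ∈ P, cycUtil G i l

/-- `opt(I)`: the maximum size of a `Γ`-cycle packing of `G`. -/
noncomputable def optSize (I : IKEP) : ℕ :=
  sSup {m | ∃ P, IsGammaPacking I P ∧ packSize P = m}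

/-- `nat_i(I)`: the maximum size of a `Γ`-cycle packing of the subgraph
`G[V_i]` induced by country `i` (all its cycles are national, so the only
constraint from `Γ` is the national cycle limit `ncl i`). -/
noncomputable def natSize (I : IKEP) (i : Fin I.n) : ℕ :=
  sSup {m | ∃ P, IsPacking I.G P ∧ (∀ l ∈ P, IsNationalTo I.G l i) ∧
    (∀ l ∈ P, (l.length : ℕ∞) ≤ I.prm.ncl i) ∧ packSize P = m}

/-- A (randomised) mechanism: for every IKEP instance it returns one `Γ`-cycle
packing according to a (finitely supported) probability distribution on the
set `𝒟_I` of all `Γ`-cycle packings of `G`. -/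
structure Mechanism where
  dist : IKEP → (Finset (List ℕ) →₀ ℝ)
  nonneg : ∀ I P, 0 ≤ dist I P
  sum_one : ∀ I, ((dist I).sum fun _ p => p) = 1
  supp : ∀ I P, dist I P ≠ 0 → IsGammaPacking I P

/-- The expected utility `U_i(ℳ(I))` of country `i`. -/
noncomputable def expUtil (M : Mechanism) (I : IKEP) (i : Fin I.n) : ℝ :=
  (M.dist I).sum fun P p => p * (packUtil I.G i P : ℝ)

/-- The expected social welfare `SW(ℳ(I)) = Σ_i U_i(ℳ(I))`: the expected size
of the returned packing. -/
noncomputable def sw (M : Mechanism) (I : IKEP) : ℝ :=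
  (M.dist I).sum fun P p => p * (packSize P : ℝ)

/-- Individual rationality. -/
def IndRational (M : Mechanism) : Prop :=
  ∀ I : IKEP, ∀ i : Fin I.n, (natSize I i : ℝ) ≤ expUtil M I i

/-- Efficiency. -/
def Efficient (M : Mechanism) : Prop :=
  ∀ I : IKEP, sw M I = (optSize I : ℝ)

/-- `Γ' ≤ᵢ Γ`: country `i` misreports by declaring (weakly) smaller
international segment size and segment number; all other parameters agree. -/
def ParamLE {n : ℕ} (i : Fin n) (Γ' Γ : Params n) : Prop :=
  Γ'.icl = Γ.icl ∧ Γ'.ncl = Γ.ncl ∧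
    Γ'.iss i ≤ Γ.iss i ∧ Γ'.isn i ≤ Γ.isn i ∧
    (∀ h, h ≠ i → Γ'.iss h = Γ.iss h) ∧ (∀ h, h ≠ i → Γ'.isn h = Γ.isn h)

/-- Incentive compatibility (with respect to segment size and segment number). -/
def IncentiveCompatible (M : Mechanism) : Prop :=
  ∀ I : IKEP, ∀ i : Fin I.n, ∀ Γ' : Params I.n, ParamLE i Γ' I.prm →
    expUtil M { I with prm := Γ' } i ≤ expUtil M I i

/-- An international `Γ`-cycle of the instance `I`. -/
def IsIntlGammaCycle (I : IKEP) (l : List ℕ) : Prop :=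
  IsGammaCycle I.G I.prm l ∧ IsInternational I.G l

/-- `c_int(I)`: the maximum length of an international `Γ`-cycle of `G`. -/
noncomputable def cInt (I : IKEP) : ℕ :=
  sSup {s | ∃ l, IsIntlGammaCycle I l ∧ l.length = s}


/-! ### The mechanism `ℳ_order` -/

/-- Nodup lists with entries in a fixed finite set form a finite set. -/
lemma finite_nodup_lists (s : Finset ℕ) :
    {l : List ℕ | l.Nodup ∧ ∀ x ∈ l, x ∈ s}.Finite := by
  classical
  have h : {l : List ℕ | l.Nodup ∧ ∀ x ∈ l, x ∈ s} ⊆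
      Set.range fun l : {l : List {x : ℕ // x ∈ s} // l.Nodup} =>
        l.1.map Subtype.val := by
    rintro l ⟨hnd, hmem⟩
    refine ⟨⟨l.attach.map fun x => ⟨x.1, hmem x.1 x.2⟩, ?_⟩, ?_⟩
    · refine (List.nodup_attach.mpr hnd).map ?_
      intro x y hxy
      have h2 := congrArg Subtype.val hxy
      exact Subtype.ext h2
    · simp [List.map_map, Function.comp]
  exact (Set.finite_range _).subset h

/-- The canonical list representation of a cycle: the one (among its
rotations) starting at its smallest vertex.  Working with canonical
representatives identifies lists up to rotation, i.e. identifies the abstract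
cycles. -/
def IsCanon (l : List ℕ) : Prop := ∀ v ∈ l, l.headI ≤ v

/-- Membership in `𝒳(Ĝ)`: `l` is (the canonical representation of) an
international cycle of `G` of length at most `icl` all of whose vertices
belong to `avail` (the vertices of `Ĝ`). -/
def XCond {n : ℕ} (G : PartGraph n) (icl : ℕ∞) (avail : Finset ℕ) (l : List ℕ) : Prop :=
  IsCycle G l ∧ (∀ v ∈ l, v ∈ avail) ∧ IsInternational G l ∧
    (l.length : ℕ∞) ≤ icl ∧ IsCanon l

lemma XCond_finite {n : ℕ} (G : PartGraph n) (icl : ℕ∞) (avail : Finset ℕ) :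
    {l | XCond G icl avail l}.Finite :=
  (finite_nodup_lists avail).subset fun _ hl => ⟨hl.1.2.1, hl.2.1⟩

/-- The set `𝒳(Ĝ)`, listed in some fixed order. -/
noncomputable def XList {n : ℕ} (G : PartGraph n) (icl : ℕ∞) (avail : Finset ℕ) :
    List (List ℕ) :=
  (XCond_finite G icl avail).toFinset.toList

/-- `l` is (the canonical representation of) a substitute for the cycle `C`:
an international `Γ`-cycle of `G` whose vertex set is contained in that of `C`
and which has at most one `V_i`-segment for every country `i`. -/
def SubCond {n : ℕ} (G : PartGraph n) (Γ : Params n) (C l : List ℕ) : Prop :=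
  IsGammaCycle G Γ l ∧ IsInternational G l ∧ (∀ v ∈ l, v ∈ C) ∧
    (∀ i, numSegs G l i ≤ 1) ∧ IsCanon l

lemma SubCond_finite {n : ℕ} (G : PartGraph n) (Γ : Params n) (C : List ℕ) :
    {l | SubCond G Γ C l}.Finite :=
  (finite_nodup_lists C.toFinset).subset fun _ hl =>
    ⟨hl.1.1.2.1, fun x hx => List.mem_toFinset.mpr (hl.2.2.1 x hx)⟩

/-- The substitutes for `C`, listed in some fixed order. -/
noncomputable def subList {n : ℕ} (G : PartGraph n) (Γ : Params n) (C : List ℕ) :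
    List (List ℕ) :=
  (SubCond_finite G Γ C).toFinset.toList

/-- `c` is vertex-disjoint from all cycles in `acc`. -/
def DisjFrom (acc : List (List ℕ)) (c : List ℕ) : Prop :=
  ∀ a ∈ acc, ∀ v ∈ c, v ∉ a

/-- Step 4 of `ℳ_order`: scan the ordering and greedily collect pairwise
vertex-disjoint cycles. -/
noncomputable def greedy : List (List ℕ) → List (List ℕ) → List (List ℕ)
  | acc, [] => acc
  | acc, c :: rest => if DisjFrom acc c then greedy (c :: acc) rest else greedy acc rest

/-- Step 5 of `ℳ_order`, in expectation: process the greedily selected cycles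
one by one (keeping `Γ`-cycles, replacing turnable non-`Γ`-cycles by a
uniformly random substitute, deleting the rest), finally accumulating them
into `acc` (initialised with `𝒞_nat`), and return the expected value of `f`
of the resulting packing. -/
noncomputable def stepExp {n : ℕ} (G : PartGraph n) (Γ : Params n)
    (f : Finset (List ℕ) → ℝ) : List (List ℕ) → Finset (List ℕ) → ℝ
  | [], acc => f acc
  | C :: rest, acc =>
    if IsGammaCycle G Γ C then stepExp G Γ f rest (insert C acc)
    else if subList G Γ C ≠ [] then
      (((subList G Γ C).map fun D => stepExp G Γ f rest (insert D acc)).sum) /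
        ((subList G Γ C).length : ℝ)
    else stepExp G Γ f rest acc

/-- The expected value of `f` of the packing returned by `ℳ_order` on input
`I`, given that Step 1 pre-selected the national packing `Cnat`: the ordering
of `𝒳(Ĝ)` in Step 3 is uniformly random, and the substitutes in Step 5 are
chosen independently and uniformly at random. -/
noncomputable def MorderExpFrom (I : IKEP) (Cnat : Finset (List ℕ))
    (f : Finset (List ℕ) → ℝ) : ℝ :=
  let avail := I.G.verts \ Cnat.biUnion List.toFinset
  let XL := XList I.G I.prm.icl avail
  ((XL.permutations.map fun ord => stepExp I.G I.prm f (greedy [] ord) Cnat).sum) /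
    (XL.permutations.length : ℝ)

/-- A national `Γ`-cycle packing (only the national cycle limits `ncl` are
relevant). -/
def IsNatPacking {n : ℕ} (G : PartGraph n) (ncl : Fin n → ℕ∞)
    (P : Finset (List ℕ)) : Prop :=
  IsPacking G P ∧ ∀ l ∈ P, ∃ i, IsNationalTo G l i ∧ (l.length : ℕ∞) ≤ ncl i

/-- A maximum national `Γ`-cycle packing. -/
def IsMaxNatPacking {n : ℕ} (G : PartGraph n) (ncl : Fin n → ℕ∞)
    (P : Finset (List ℕ)) : Prop :=
  IsNatPacking G ncl P ∧ ∀ Q, IsNatPacking G ncl Q → packSize Q ≤ packSize P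

/-- A pre-selection function `σ`: it assigns to every partitioned graph and
every national cycle-limit vector a maximum national `Γ`-cycle packing
(depending only on these data). -/
structure PreSelection where
  sel : (n : ℕ) → PartGraph n → (Fin n → ℕ∞) → Finset (List ℕ)
  isMax : ∀ (n : ℕ) (G : PartGraph n) (ncl : Fin n → ℕ∞),
    IsMaxNatPacking G ncl (sel n G ncl)

/-- The expected value of `f` of the packing returned by `ℳ_order` (with
pre-selection function `σ`) on input `I`. -/
noncomputable def MorderExp (σ : PreSelection) (I : IKEP)
    (f : Finset (List ℕ) → ℝ) : ℝ :=
  MorderExpFrom I (σ.sel I.n I.G I.prm.ncl) f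

/-- The expected utility `U_i(ℳ_order(I))` of country `i`. -/
noncomputable def MorderU (σ : PreSelection) (I : IKEP) (i : Fin I.n) : ℝ :=
  MorderExp σ I fun P => (packUtil I.G i P : ℝ)

/-- The expected social welfare `SW(ℳ_order(I))`: the expected size of the
returned packing. -/
noncomputable def MorderSW (σ : PreSelection) (I : IKEP) : ℝ :=
  MorderExp σ I fun P => (packSize P : ℝ)



section Aux
variable {n : ℕ}

lemma cyc_congr (l : List ℕ) {k m : ℕ} (h : k % l.length = m % l.length) :
    cyc l k = cyc l m := by unfold cyc; rw [h]

lemma cyc_mod (l : List ℕ) (k : ℕ) : cyc l (k % l.length) = cyc l k :=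
  cyc_congr l (Nat.mod_mod_of_dvd _ dvd_rfl)

lemma cyc_eq_getD (l : List ℕ) {k : ℕ} (hk : k < l.length) : cyc l k = l.getD k 0 := by
  unfold cyc; rw [Nat.mod_eq_of_lt hk]

lemma cyc_mem (l : List ℕ) (hl : l ≠ []) (k : ℕ) : cyc l k ∈ l := by
  unfold cyc
  have : k % l.length < l.length := Nat.mod_lt _ (List.length_pos_iff.2 hl)
  rw [List.getD_eq_getElem l 0 this]
  exact List.getElem_mem _

lemma mem_iff_cyc {l : List ℕ} (hl : l ≠ []) {v : ℕ} :
    v ∈ l ↔ ∃ q < l.length, cyc l q = v := by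
  constructor
  · intro hv
    obtain ⟨q, hq, he⟩ := List.mem_iff_getElem.1 hv
    exact ⟨q, hq, by rw [cyc_eq_getD l hq, List.getD_eq_getElem l 0 hq, he]⟩
  · rintro ⟨q, _, rfl⟩; exact cyc_mem l hl q

lemma cycUtil_card_aux (G : PartGraph n) (i : Fin n) : ∀ (l : List ℕ),
    cycUtil G i l =
      ((Finset.range l.length).filter fun k => G.country (l.getD k 0) = i).card := by
  intro l
  induction l with
  | nil => simp [cycUtil]
  | cons a t ih =>
    rw [Finset.card_filter, List.length_cons, Finset.sum_range_succ']
    simp only [List.getD_cons_succ, List.getD_cons_zero, ← Finset.card_filter]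
    unfold cycUtil at *
    rw [List.filter_cons]
    by_cases h : G.country a = i <;> simp [h, ih]

lemma cycUtil_eq_card (G : PartGraph n) (i : Fin n) (l : List ℕ) :
    cycUtil G i l =
      ((Finset.range l.length).filter fun k => G.country (cyc l k) = i).card := by
  rw [cycUtil_card_aux]
  congr 1
  apply Finset.filter_congr
  intro k hk
  rw [cyc_eq_getD l (Finset.mem_range.1 hk)]

lemma runLen_le_cycUtil (G : PartGraph n) (i : Fin n) {l : List ℕ} (hnd : l.Nodup)
    (hpos : 0 < l.length) (k : ℕ) : runLen G l i k ≤ cycUtil G i l := by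
  rw [cycUtil_eq_card]
  apply Finset.card_le_card_of_injOn (fun j => (k + j) % l.length)
  · intro j hj
    simp only [Finset.mem_coe, Finset.mem_filter, Finset.mem_range] at hj ⊢
    refine ⟨Nat.mod_lt _ hpos, ?_⟩
    rw [cyc_mod]
    exact hj.2 j le_rfl
  · intro j1 h1 j2 h2 he
    simp only [Finset.coe_filter, Set.mem_setOf_eq, Finset.mem_range] at h1 h2
    have : j1 % l.length = j2 % l.length :=
      Nat.ModEq.add_left_cancel' k he
    rwa [Nat.mod_eq_of_lt h1.1, Nat.mod_eq_of_lt h2.1] at this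

lemma exists_segStart (G : PartGraph n) (i : Fin n) {l : List ℕ} (hpos : 0 < l.length)
    (hp : ∃ p < l.length, G.country (cyc l p) = i)
    (hq : ∃ q < l.length, G.country (cyc l q) ≠ i) :
    ∃ k < l.length, segStart G l i k := by
  by_contra hno
  push_neg at hno
  obtain ⟨p, hp1, hp2⟩ := hp
  obtain ⟨q, hq1, hq2⟩ := hq
  obtain ⟨e, he⟩ : ∃ e, l.length = e + 1 := ⟨l.length - 1, by omega⟩
  have key : ∀ j, G.country (cyc l (p + j * e)) = i := by
    intro j
    induction j with
    | zero => simpa using hp2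
    | succ j ihj =>
      set x := p + j * e with hx
      have hk0 : x % l.length < l.length := Nat.mod_lt _ hpos
      have hc0 : G.country (cyc l (x % l.length)) = i := by rw [cyc_mod]; exact ihj
      have hns := hno _ hk0
      unfold segStart at hns
      push_neg at hns
      have h2 : G.country (cyc l (x % l.length + l.length - 1)) = i := hns hc0
      have harith : (x % l.length + l.length - 1) % l.length = (x + e) % l.length := by
        have h3 : x % l.length + l.length - 1 = x % l.length + e := by omega
        rw [h3, Nat.mod_add_mod]
      rw [cyc_congr l harith] at h2
      have : p + (j + 1) * e = x + e := by rw [hx]; ring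
      rwa [this]
  have hqle : q ≤ e := by omega
  obtain ⟨d, hd⟩ := Nat.le.dest hqle
  have harr : p + (p + d + 1) * e = l.length * (p + d) + q := by
    rw [he, ← hd]; ring
  have hkey := key (p + d + 1)
  rw [harr] at hkey
  rw [cyc_congr l (show (l.length*(p+d) + q) % l.length = q % l.length from
    Nat.mul_add_mod _ _ _)] at hkey
  exact hq2 hkey

end Aux

section Aux2
variable {n : ℕ}

lemma cycUtil_le_runLen (G : PartGraph n) (i : Fin n) {l : List ℕ}
    (hpos : 0 < l.length) (hseg : numSegs G l i ≤ 1) {k : ℕ} (hk : k < l.length)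
    (hks : segStart G l i k) : cycUtil G i l ≤ runLen G l i k := by
  have hrec : ∀ p, p < l.length → (k + (p + l.length - k) % l.length) % l.length = p := by
    intro p hp
    rw [Nat.add_mod_mod]
    have h1 : k + (p + l.length - k) = p + l.length := by omega
    rw [h1, Nat.add_mod_right, Nat.mod_eq_of_lt hp]
  rw [cycUtil_eq_card]
  apply Finset.card_le_card_of_injOn (fun p => (p + l.length - k) % l.length)
  · intro p hp
    simp only [Finset.mem_coe, Finset.mem_filter, Finset.mem_range] at hp ⊢
    obtain ⟨hp1, hp2⟩ := hp
    set j := (p + l.length - k) % l.length with hj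
    have hjlt : j < l.length := Nat.mod_lt _ hpos
    refine ⟨hjlt, ?_⟩
    have hcj : G.country (cyc l (k + j)) = i := by
      rw [cyc_congr l (show (k + j) % l.length = p % l.length by
        rw [hrec p hp1, Nat.mod_eq_of_lt hp1])]
      exact hp2
    -- the run condition
    by_contra hbad
    push_neg at hbad
    obtain ⟨j', hj'le, hj'⟩ := hbad
    -- T : set of starts t such that [t, j] is all country i
    have hTne : ∃ t, t ≤ j ∧ ∀ s, t ≤ s → s ≤ j → G.country (cyc l (k + s)) = i :=
      ⟨j, le_rfl, fun s h1 h2 => by rwa [le_antisymm h2 h1]⟩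
    classical
    set t0 := Nat.find hTne with ht0
    obtain ⟨ht0j, hPt0⟩ := Nat.find_spec hTne
    have ht0pos : 1 ≤ t0 := by
      rcases Nat.eq_zero_or_pos t0 with h0 | h1
      · exact absurd (hPt0 j' (by omega) hj'le) hj'
      · exact h1
    have hprev : G.country (cyc l (k + (t0 - 1))) ≠ i := by
      intro hcon
      have : t0 - 1 < t0 := by omega
      refine Nat.find_min hTne this ⟨by omega, fun s hs1 hs2 => ?_⟩
      rcases Nat.lt_or_ge s t0 with h | h
      · have : s = t0 - 1 := by omega
        rwa [this]
      · exact hPt0 s h hs2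
    -- second segment start
    set s2 := (k + t0) % l.length with hs2
    have hs2lt : s2 < l.length := Nat.mod_lt _ hpos
    have hs2seg : segStart G l i s2 := by
      constructor
      · rw [cyc_mod]
        exact hPt0 t0 le_rfl ht0j
      · have harith : (s2 + l.length - 1) % l.length = (k + (t0 - 1)) % l.length := by
          obtain ⟨e, he⟩ : ∃ e, l.length = e + 1 := ⟨l.length - 1, by omega⟩
          have h2 : s2 + l.length - 1 = s2 + e := by omega
          rw [h2, hs2, Nat.mod_add_mod]
          have h3 : k + t0 + e = (k + (t0 - 1)) + l.length := by omega
          rw [h3, Nat.add_mod_right]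
        rw [cyc_congr l harith]
        exact hprev
    have hne : s2 ≠ k := by
      intro hcon
      have hmod : t0 % l.length = 0 % l.length := by
        apply Nat.ModEq.add_left_cancel' k
        show (k + t0) % l.length = (k + 0) % l.length
        rw [Nat.add_zero, Nat.mod_eq_of_lt hk]
        exact hcon
      rw [Nat.zero_mod, Nat.mod_eq_of_lt (show t0 < l.length by omega)] at hmod
      omega
    -- two distinct segment starts, contradiction with numSegs ≤ 1
    have hsub : ({k, s2} : Finset ℕ) ⊆ (Finset.range l.length).filter
        (fun m => segStart G l i m) := by
      intro x hx
      simp only [Finset.mem_insert, Finset.mem_singleton] at hx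
      rcases hx with rfl | rfl
      · exact Finset.mem_filter.2 ⟨Finset.mem_range.2 hk, hks⟩
      · exact Finset.mem_filter.2 ⟨Finset.mem_range.2 hs2lt, hs2seg⟩
    have h2le : 2 ≤ numSegs G l i := by
      have := Finset.card_le_card hsub
      rwa [Finset.card_insert_of_notMem (by simpa using hne.symm),
        Finset.card_singleton] at this
    omega
  · intro p1 h1 p2 h2 he
    simp only [Finset.coe_filter, Set.mem_setOf_eq, Finset.mem_range] at h1 h2
    have := congrArg (fun m => (k + m) % l.length) he
    simpa [hrec p1 h1.1, hrec p2 h2.1] using this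

end Aux2

section AuxK
variable {n : ℕ}

lemma cycle_len_pos {G : PartGraph n} {l : List ℕ} (h : IsCycle G l) : 0 < l.length := by
  have := h.1; omega

lemma cycle_ne_nil {G : PartGraph n} {l : List ℕ} (h : IsCycle G l) : l ≠ [] :=
  List.length_pos_iff.1 (cycle_len_pos h)

lemma paramLE_iss {i : Fin n} {Γ' Γ : Params n} (h : ParamLE i Γ' Γ) (j : Fin n) :
    Γ'.iss j ≤ Γ.iss j := by
  by_cases hj : j = i
  · subst hj; exact h.2.2.1
  · rw [h.2.2.2.2.1 j hj]

lemma paramLE_isn {i : Fin n} {Γ' Γ : Params n} (h : ParamLE i Γ' Γ) (j : Fin n) :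
    Γ'.isn j ≤ Γ.isn j := by
  by_cases hj : j = i
  · subst hj; exact h.2.2.2.1
  · rw [h.2.2.2.2.2 j hj]

lemma gammaCycle_mono {G : PartGraph n} {i : Fin n} {Γ' Γ : Params n}
    (hle : ParamLE i Γ' Γ) {l : List ℕ} (h : IsGammaCycle G Γ' l) :
    IsGammaCycle G Γ l := by
  obtain ⟨hc, hd⟩ := h
  refine ⟨hc, ?_⟩
  rcases hd with ⟨j, hj, hlen⟩ | ⟨hint, hlen, hiss, hisn⟩
  · exact Or.inl ⟨j, hj, by rwa [← hle.2.1]⟩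
  · refine Or.inr ⟨hint, by rwa [← hle.1], fun j k hk hs => ?_, fun j => ?_⟩
    · exact le_trans (hiss j k hk hs) (paramLE_iss hle j)
    · exact le_trans (hisn j) (paramLE_isn hle j)

lemma intl_gamma {G : PartGraph n} {Γ : Params n} {l : List ℕ}
    (h : IsGammaCycle G Γ l) (hint : IsInternational G l) :
    (l.length : ℕ∞) ≤ Γ.icl ∧
      (∀ i, ∀ k < l.length, segStart G l i k → (runLen G l i k : ℕ∞) ≤ Γ.iss i) ∧
      ∀ i, (numSegs G l i : ℕ∞) ≤ Γ.isn i := by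
  rcases h.2 with ⟨j, hj, _⟩ | ⟨_, h1, h2, h3⟩
  · exact absurd ⟨j, hj⟩ hint
  · exact ⟨h1, h2, h3⟩

lemma exists_pos_of_cycUtil_pos {G : PartGraph n} {i : Fin n} {l : List ℕ}
    (h : 0 < cycUtil G i l) : ∃ p < l.length, G.country (cyc l p) = i := by
  rw [cycUtil_eq_card] at h
  obtain ⟨p, hp⟩ := Finset.card_pos.1 h
  simp only [Finset.mem_filter, Finset.mem_range] at hp
  exact ⟨p, hp.1, hp.2⟩

lemma exists_not_i_of_intl {G : PartGraph n} {i : Fin n} {l : List ℕ} (hl : l ≠ [])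
    (hint : IsInternational G l) : ∃ q < l.length, G.country (cyc l q) ≠ i := by
  have : ¬ IsNationalTo G l i := fun hn => hint ⟨i, hn⟩
  unfold IsNationalTo at this
  push_neg at this
  obtain ⟨v, hv, hvi⟩ := this
  obtain ⟨q, hq, rfl⟩ := (mem_iff_cyc hl).1 hv
  exact ⟨q, hq, hvi⟩

/-- utility of a one-segment international Γ-cycle is at most `iss i`. -/
lemma cycUtil_le_iss {G : PartGraph n} {Γ : Params n} {i : Fin n} {l : List ℕ}
    (hg : IsGammaCycle G Γ l) (hint : IsInternational G l)
    (hseg : numSegs G l i ≤ 1) : (cycUtil G i l : ℕ∞) ≤ Γ.iss i := by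
  rcases Nat.eq_zero_or_pos (cycUtil G i l) with h0 | h0
  · rw [h0]; simp
  · obtain ⟨hlen, hiss, _⟩ := intl_gamma hg hint
    obtain ⟨k, hk, hks⟩ := exists_segStart G i (cycle_len_pos hg.1)
      (exists_pos_of_cycUtil_pos h0) (exists_not_i_of_intl (cycle_ne_nil hg.1) hint)
    calc (cycUtil G i l : ℕ∞) ≤ (runLen G l i k : ℕ∞) := by
          exact_mod_cast cycUtil_le_runLen G i (cycle_len_pos hg.1) hseg hk hks
      _ ≤ Γ.iss i := hiss i k hk hks

/-- a Γ-cycle with one segment per country that is NOT a Γ'-cycle must have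
large country-i utility. -/
lemma iss_lt_cycUtil {G : PartGraph n} {i : Fin n} {Γ' Γ : Params n}
    (hle : ParamLE i Γ' Γ) {l : List ℕ} (hg : IsGammaCycle G Γ l)
    (hint : IsInternational G l) (hseg : ∀ j, numSegs G l j ≤ 1)
    (hng : ¬ IsGammaCycle G Γ' l) : Γ'.iss i < (cycUtil G i l : ℕ∞) := by
  obtain ⟨hlen, hiss, hisn⟩ := intl_gamma hg hint
  have hbad : ∃ j, ∃ k < l.length, segStart G l j k ∧
      ¬ ((runLen G l j k : ℕ∞) ≤ Γ'.iss j) := by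
    by_contra hok
    push_neg at hok
    refine hng ⟨hg.1, Or.inr ⟨hint, by rwa [hle.1], fun j k hk hs => hok j k hk hs, fun j => ?_⟩⟩
    calc (numSegs G l j : ℕ∞) ≤ (1 : ℕ) := by exact_mod_cast hseg j
      _ = (1 : ℕ∞) := by norm_num
      _ ≤ Γ'.isn j := Γ'.isn_pos j
  obtain ⟨j, k, hk, hks, hgt⟩ := hbad
  have hji : j = i := by
    by_contra hji
    exact hgt (by rw [hle.2.2.2.2.1 j hji]; exact hiss j k hk hks)
  subst hji
  push_neg at hgt
  calc Γ'.iss j < (runLen G l j k : ℕ∞) := hgt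
    _ ≤ (cycUtil G j l : ℕ∞) := by
        exact_mod_cast runLen_le_cycUtil G j hg.1.2.1 (cycle_len_pos hg.1) k

/-- the key comparison: substitutes for Γ' have no larger i-utility than
substitutes for Γ that are not substitutes for Γ'. -/
lemma key_compare {G : PartGraph n} {i : Fin n} {Γ' Γ : Params n}
    (hle : ParamLE i Γ' Γ) {C D D' : List ℕ}
    (hD : SubCond G Γ C D) (hD2 : ¬ SubCond G Γ' C D)
    (hD' : SubCond G Γ' C D') : cycUtil G i D' ≤ cycUtil G i D := by
  obtain ⟨hg, hint, hsub, hseg, hcan⟩ := hD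
  have hng : ¬ IsGammaCycle G Γ' D := fun hcon =>
    hD2 ⟨hcon, hint, hsub, hseg, hcan⟩
  have h1 : (cycUtil G i D' : ℕ∞) ≤ Γ'.iss i :=
    cycUtil_le_iss hD'.1 hD'.2.1 (hD'.2.2.2.1 i)
  have h2 : Γ'.iss i < (cycUtil G i D : ℕ∞) :=
    iss_lt_cycUtil hle hg hint hseg hng
  exact_mod_cast h1.trans_lt h2 |>.le

end AuxK

section AuxStep
variable {n : ℕ}

/-- lower bound on list averages -/
lemma le_list_avg {L : List ℝ} {c : ℝ} (hne : L ≠ []) (h : ∀ x ∈ L, c ≤ x) :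
    c ≤ L.sum / L.length := by
  have hlen : 0 < (L.length : ℝ) := by
    have := List.length_pos_iff.2 hne; exact_mod_cast this
  rw [le_div_iff₀ hlen]
  calc c * L.length = L.length • c := by rw [nsmul_eq_mul]; ring
    _ ≤ L.sum := List.card_nsmul_le_sum L c h

lemma list_avg_le {L : List ℝ} {c : ℝ} (hne : L ≠ []) (h : ∀ x ∈ L, x ≤ c) :
    L.sum / L.length ≤ c := by
  have hlen : 0 < (L.length : ℝ) := by
    have := List.length_pos_iff.2 hne; exact_mod_cast this
  rw [div_le_iff₀ hlen]
  calc L.sum ≤ L.length • c := List.sum_le_card_nsmul L c h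
    _ = c * L.length := by rw [nsmul_eq_mul]; ring

lemma list_avg_eq_one {L : List ℝ} (hne : L ≠ []) (h : ∀ x ∈ L, x = 1) :
    L.sum / L.length = 1 := by
  have hlen : 0 < (L.length : ℝ) := by
    have := List.length_pos_iff.2 hne; exact_mod_cast this
  rw [List.sum_eq_card_nsmul L 1 h, nsmul_eq_mul, mul_one, div_self (ne_of_gt hlen)]

lemma list_sum_map_const_add {α : Type*} (L : List α) (c : ℝ) (g : α → ℝ) :
    (L.map fun x => c + g x).sum = (L.length : ℝ) * c + (L.map g).sum := by
  induction L with
  | nil => simp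
  | cons a t ih => simp [ih]; ring

lemma packUtil_insert {G : PartGraph n} {i : Fin n} {D : List ℕ} {acc : Finset (List ℕ)}
    (h : D ∉ acc) : packUtil G i (insert D acc) = cycUtil G i D + packUtil G i acc :=
  Finset.sum_insert h

lemma not_mem_of_vdisj {D : List ℕ} {acc : Finset (List ℕ)} (hne : D ≠ [])
    (h : ∀ a ∈ acc, ∀ v ∈ D, v ∉ a) : D ∉ acc := by
  intro hmem
  obtain ⟨v, hv⟩ := List.exists_mem_of_ne_nil D hne
  exact h D hmem v hv hv

lemma mem_subList {G : PartGraph n} {Γ : Params n} {C D : List ℕ} :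
    D ∈ subList G Γ C ↔ SubCond G Γ C D := by
  rw [subList, Finset.mem_toList, Set.Finite.mem_toFinset]
  rfl

lemma subCond_mono {G : PartGraph n} {i : Fin n} {Γ' Γ : Params n}
    (hle : ParamLE i Γ' Γ) {C D : List ℕ} (h : SubCond G Γ' C D) : SubCond G Γ C D :=
  ⟨gammaCycle_mono hle h.1, h.2.1, h.2.2.1, h.2.2.2.1, h.2.2.2.2⟩

lemma subCond_ne_nil {G : PartGraph n} {Γ : Params n} {C D : List ℕ}
    (h : SubCond G Γ C D) : D ≠ [] := cycle_ne_nil h.1.1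

lemma cycUtil_le_of_subset {G : PartGraph n} {i : Fin n} {D C : List ℕ}
    (hD : D.Nodup) (hC : C.Nodup) (hsub : ∀ v ∈ D, v ∈ C) :
    cycUtil G i D ≤ cycUtil G i C := by
  unfold cycUtil
  rw [← List.toFinset_card_of_nodup (hD.filter _),
    ← List.toFinset_card_of_nodup (hC.filter _)]
  apply Finset.card_le_card
  intro v hv
  simp only [List.mem_toFinset, List.mem_filter] at hv ⊢
  exact ⟨hsub v hv.1, hv.2⟩

/-- additivity of `stepExp` for the utility objective -/
lemma stepExp_add (G : PartGraph n) (Γ : Params n) (i : Fin n) :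
    ∀ (l : List (List ℕ)) (acc : Finset (List ℕ)),
      (∀ C ∈ l, IsCycle G C) →
      l.Pairwise (fun a b => ∀ v ∈ a, v ∉ b) →
      (∀ C ∈ l, ∀ a ∈ acc, ∀ v ∈ C, v ∉ a) →
      stepExp G Γ (fun P => (packUtil G i P : ℝ)) l acc
        = (packUtil G i acc : ℝ) +
          stepExp G Γ (fun P => (packUtil G i P : ℝ)) l ∅ := by
  intro l
  induction l with
  | nil => intro acc _ _ _; simp [stepExp, packUtil]
  | cons C rest ih =>
    intro acc hcyc hpw hdisj
    have hCcyc : IsCycle G C := hcyc C (List.mem_cons_self)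
    have hrestcyc : ∀ B ∈ rest, IsCycle G B := fun B hB => hcyc B (List.mem_cons_of_mem _ hB)
    have hpwC : ∀ b ∈ rest, ∀ v ∈ C, v ∉ b := (List.pairwise_cons.1 hpw).1
    have hpwrest := (List.pairwise_cons.1 hpw).2
    have hdisjrest : ∀ B ∈ rest, ∀ a ∈ acc, ∀ v ∈ B, v ∉ a :=
      fun B hB => hdisj B (List.mem_cons_of_mem _ hB)
    -- generic helper for inserting a cycle with vertices inside C
    have hins : ∀ D : List ℕ, D ≠ [] → (∀ v ∈ D, v ∈ C) →
        stepExp G Γ (fun P => (packUtil G i P : ℝ)) rest (insert D acc)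
          = (packUtil G i acc : ℝ) + (cycUtil G i D : ℝ) +
            stepExp G Γ (fun P => (packUtil G i P : ℝ)) rest ∅ ∧
        stepExp G Γ (fun P => (packUtil G i P : ℝ)) rest (insert D ∅)
          = (cycUtil G i D : ℝ) +
            stepExp G Γ (fun P => (packUtil G i P : ℝ)) rest ∅ := by
      intro D hDne hDsub
      have hrestD : ∀ B ∈ rest, ∀ v ∈ B, v ∉ D := by
        intro B hB v hvB hvD
        exact hpwC B hB v (hDsub v hvD) hvB
      have hDacc : D ∉ acc := not_mem_of_vdisj hDne (fun a ha v hv => hdisj C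
        (List.mem_cons_self) a ha v (hDsub v hv))
      constructor
      · rw [ih (insert D acc) hrestcyc hpwrest ?_, packUtil_insert hDacc]
        · push_cast; ring
        · intro B hB a ha
          rcases Finset.mem_insert.1 ha with rfl | ha'
          · exact hrestD B hB
          · exact hdisjrest B hB a ha'
      · rw [ih (insert D ∅) hrestcyc hpwrest ?_, packUtil_insert (by simp)]
        · push_cast; simp [packUtil]
        · intro B hB a ha
          rcases Finset.mem_insert.1 ha with rfl | ha'
          · exact hrestD B hB
          · simp at ha'
    simp only [stepExp]
    by_cases hg : IsGammaCycle G Γ C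
    · rw [if_pos hg, if_pos hg]
      have h1 := (hins C (cycle_ne_nil hCcyc) (fun v hv => hv))
      rw [h1.1, h1.2]; ring
    · rw [if_neg hg, if_neg hg]
      by_cases hsl : subList G Γ C ≠ []
      · rw [if_pos hsl, if_pos hsl]
        have hmap1 : (subList G Γ C).map
            (fun D => stepExp G Γ (fun P => (packUtil G i P : ℝ)) rest (insert D acc))
            = (subList G Γ C).map (fun D => (packUtil G i acc : ℝ) +
                stepExp G Γ (fun P => (packUtil G i P : ℝ)) rest (insert D ∅)) := by
          apply List.map_congr_left
          intro D hD
          have hsc := mem_subList.1 hD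
          have h1 := hins D (subCond_ne_nil hsc) hsc.2.2.1
          rw [h1.1, h1.2]; ring
        rw [hmap1]
        have hlen : 0 < ((subList G Γ C).length : ℝ) := by
          have := List.length_pos_iff.2 hsl; exact_mod_cast this
        rw [list_sum_map_const_add, add_div, mul_div_cancel_left₀ _ (ne_of_gt hlen)]
      · rw [if_neg hsl, if_neg hsl]
        exact ih acc hrestcyc hpwrest hdisjrest

end AuxStep

section AuxLB
variable {n : ℕ}

lemma le_list_map_avg {α : Type*} {L : List α} {g : α → ℝ} {c : ℝ} (hne : L ≠ [])
    (h : ∀ a ∈ L, c ≤ g a) : c ≤ (L.map g).sum / (L.length : ℝ) := by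
  have h2 : (L.length : ℝ) = ((L.map g).length : ℝ) := by rw [List.length_map]
  rw [h2]
  exact le_list_avg (by simpa using hne) (by intro x hx; obtain ⟨a, ha, rfl⟩ := List.mem_map.1 hx; exact h a ha)

lemma list_map_avg_le {α : Type*} {L : List α} {g : α → ℝ} {c : ℝ} (hne : L ≠ [])
    (h : ∀ a ∈ L, g a ≤ c) : (L.map g).sum / (L.length : ℝ) ≤ c := by
  have h2 : (L.length : ℝ) = ((L.map g).length : ℝ) := by rw [List.length_map]
  rw [h2]
  exact list_avg_le (by simpa using hne) (by intro x hx; obtain ⟨a, ha, rfl⟩ := List.mem_map.1 hx; exact h a ha)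

lemma list_map_avg_eq_one {α : Type*} {L : List α} {g : α → ℝ} (hne : L ≠ [])
    (h : ∀ a ∈ L, g a = 1) : (L.map g).sum / (L.length : ℝ) = 1 := by
  have h2 : (L.length : ℝ) = ((L.map g).length : ℝ) := by rw [List.length_map]
  rw [h2]
  exact list_avg_eq_one (by simpa using hne) (by intro x hx; obtain ⟨a, ha, rfl⟩ := List.mem_map.1 hx; exact h a ha)

lemma packUtil_mono {G : PartGraph n} {i : Fin n} {P Q : Finset (List ℕ)}
    (h : P ⊆ Q) : packUtil G i P ≤ packUtil G i Q :=
  Finset.sum_le_sum_of_subset h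

/-- the returned packing always contains `acc`, so utility is at least that
of `acc` -/
lemma le_stepExp (G : PartGraph n) (Γ : Params n) (i : Fin n) :
    ∀ (l : List (List ℕ)) (acc : Finset (List ℕ)),
      (packUtil G i acc : ℝ) ≤ stepExp G Γ (fun P => (packUtil G i P : ℝ)) l acc := by
  intro l
  induction l with
  | nil => intro acc; simp [stepExp]
  | cons C rest ih =>
    intro acc
    have hmono : ∀ D : List ℕ, (packUtil G i acc : ℝ) ≤
        stepExp G Γ (fun P => (packUtil G i P : ℝ)) rest (insert D acc) := by
      intro D
      refine le_trans ?_ (ih (insert D acc))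
      exact_mod_cast packUtil_mono (Finset.subset_insert D acc)
    simp only [stepExp]
    by_cases hg : IsGammaCycle G Γ C
    · rw [if_pos hg]; exact hmono C
    · rw [if_neg hg]
      by_cases hsl : subList G Γ C ≠ []
      · rw [if_pos hsl]
        exact le_list_map_avg hsl (fun D _ => hmono D)
      · rw [if_neg hsl]; exact ih acc

lemma packing_insert {G : PartGraph n} {Γ : Params n} {D : List ℕ}
    {acc : Finset (List ℕ)} (hacc : IsGammaPackingG G Γ acc)
    (hD : IsGammaCycle G Γ D) (hdisj : ∀ a ∈ acc, ∀ v ∈ D, v ∉ a) :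
    IsGammaPackingG G Γ (insert D acc) := by
  refine ⟨⟨?_, ?_⟩, ?_⟩
  · intro l hl
    rcases Finset.mem_insert.1 hl with rfl | hl'
    · exact hD.1
    · exact hacc.1.1 l hl'
  · intro l hl l' hl' hne v hv
    rcases Finset.mem_insert.1 hl with rfl | h1 <;>
      rcases Finset.mem_insert.1 hl' with h2 | h2
    · exact absurd h2.symm hne
    · intro hv'; exact hdisj l' h2 v hv hv'
    · subst h2; intro hv'; exact hdisj l h1 v hv' hv
    · exact hacc.1.2 l h1 l' h2 hne v hv
  · intro l hl
    rcases Finset.mem_insert.1 hl with rfl | hl'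
    · exact hD
    · exact hacc.2 l hl'

/-- with probability 1, `stepExp` ends in a Γ-packing -/
lemma stepExp_packing (G : PartGraph n) (Γ : Params n) (f : Finset (List ℕ) → ℝ)
    (hf : ∀ P, IsGammaPackingG G Γ P → f P = 1) :
    ∀ (l : List (List ℕ)) (acc : Finset (List ℕ)),
      IsGammaPackingG G Γ acc →
      (∀ C ∈ l, IsCycle G C) →
      l.Pairwise (fun a b => ∀ v ∈ a, v ∉ b) →
      (∀ C ∈ l, ∀ a ∈ acc, ∀ v ∈ C, v ∉ a) →
      stepExp G Γ f l acc = 1 := by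
  intro l
  induction l with
  | nil => intro acc hacc _ _ _; exact hf acc hacc
  | cons C rest ih =>
    intro acc hacc hcyc hpw hdisj
    have hCcyc : IsCycle G C := hcyc C (List.mem_cons_self)
    have hrestcyc : ∀ B ∈ rest, IsCycle G B := fun B hB => hcyc B (List.mem_cons_of_mem _ hB)
    have hpwC : ∀ b ∈ rest, ∀ v ∈ C, v ∉ b := (List.pairwise_cons.1 hpw).1
    have hpwrest := (List.pairwise_cons.1 hpw).2
    have hdisjrest : ∀ B ∈ rest, ∀ a ∈ acc, ∀ v ∈ B, v ∉ a :=
      fun B hB => hdisj B (List.mem_cons_of_mem _ hB)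
    have hkey : ∀ D : List ℕ, IsGammaCycle G Γ D → (∀ v ∈ D, v ∈ C) →
        stepExp G Γ f rest (insert D acc) = 1 := by
      intro D hDg hDsub
      apply ih (insert D acc)
      · exact packing_insert hacc hDg (fun a ha v hv =>
          hdisj C (List.mem_cons_self) a ha v (hDsub v hv))
      · exact hrestcyc
      · exact hpwrest
      · intro B hB a ha
        rcases Finset.mem_insert.1 ha with rfl | ha'
        · intro v hvB hvD
          exact hpwC B hB v (hDsub v hvD) hvB
        · exact hdisjrest B hB a ha'
    simp only [stepExp]
    by_cases hg : IsGammaCycle G Γ C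
    · rw [if_pos hg]; exact hkey C hg (fun v hv => hv)
    · rw [if_neg hg]
      by_cases hsl : subList G Γ C ≠ []
      · rw [if_pos hsl]
        refine list_map_avg_eq_one hsl (fun D hD => ?_)
        have hsc := mem_subList.1 hD
        exact hkey D hsc.1 hsc.2.2.1
      · rw [if_neg hsl]; exact ih acc hacc hrestcyc hpwrest hdisjrest

end AuxLB

section AuxIC
variable {n : ℕ}

lemma avg_le_avg {S' S : Finset (List ℕ)} (hsub : S' ⊆ S) (hne : S'.Nonempty)
    (g : List ℕ → ℝ)
    (hcross : ∀ a ∈ S', ∀ b ∈ S, b ∉ S' → g a ≤ g b) :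
    (∑ a ∈ S', g a) / (S'.card : ℝ) ≤ (∑ a ∈ S, g a) / (S.card : ℝ) := by
  have hc' : 0 < (S'.card : ℝ) := by exact_mod_cast Finset.card_pos.2 hne
  have hc : 0 < (S.card : ℝ) := by
    exact_mod_cast Finset.card_pos.2 (hne.mono hsub)
  rw [div_le_div_iff₀ hc' hc]
  have hsd : ∑ a ∈ S \ S', g a + ∑ a ∈ S', g a = ∑ a ∈ S, g a := Finset.sum_sdiff hsub
  have hcard : (S \ S').card + S'.card = S.card := Finset.card_sdiff_add_card_eq_card hsub
  have hkey : (∑ a ∈ S', g a) * ((S \ S').card : ℝ) ≤ (∑ b ∈ S \ S', g b) * (S'.card : ℝ) := by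
    have h1 : (∑ a ∈ S', g a) * ((S \ S').card : ℝ) = ∑ a ∈ S', ∑ _b ∈ S \ S', g a := by
      rw [Finset.sum_mul]
      apply Finset.sum_congr rfl
      intro a _
      rw [Finset.sum_const, nsmul_eq_mul, mul_comm]
    have h2 : (∑ b ∈ S \ S', g b) * (S'.card : ℝ) = ∑ a ∈ S', ∑ b ∈ S \ S', g b := by
      rw [Finset.sum_const, nsmul_eq_mul]
      ring
    rw [h1, h2]
    refine Finset.sum_le_sum (fun a ha => Finset.sum_le_sum (fun b hb => ?_))
    have hb' := Finset.mem_sdiff.1 hb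
    exact hcross a ha b hb'.1 hb'.2
  calc (∑ a ∈ S', g a) * (S.card : ℝ)
      = (∑ a ∈ S', g a) * ((S \ S').card : ℝ) + (∑ a ∈ S', g a) * (S'.card : ℝ) := by
        rw [← hcard]; push_cast; ring
    _ ≤ (∑ b ∈ S \ S', g b) * (S'.card : ℝ) + (∑ a ∈ S', g a) * (S'.card : ℝ) := by
        linarith
    _ = (∑ a ∈ S, g a) * (S'.card : ℝ) := by rw [← hsd]; ring

lemma subList_toFinset (G : PartGraph n) (Γ : Params n) (C : List ℕ) :
    subList G Γ C = (SubCond_finite G Γ C).toFinset.toList := rfl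

lemma cycUtil_nonneg (G : PartGraph n) (i : Fin n) (D : List ℕ) :
    (0 : ℝ) ≤ (cycUtil G i D : ℝ) := by positivity

lemma packUtil_singleton (G : PartGraph n) (i : Fin n) (D : List ℕ) :
    packUtil G i (insert D ∅) = cycUtil G i D := by simp [packUtil]

/-- value of continuing from a single inserted cycle whose vertices avoid the rest -/
lemma stepExp_insert_one (G : PartGraph n) (Δ : Params n) (i : Fin n)
    {rest : List (List ℕ)} (hrestcyc : ∀ B ∈ rest, IsCycle G B)
    (hpwrest : rest.Pairwise (fun a b => ∀ v ∈ a, v ∉ b))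
    {D : List ℕ} (hD : ∀ B ∈ rest, ∀ v ∈ B, v ∉ D) :
    stepExp G Δ (fun P => (packUtil G i P : ℝ)) rest (insert D ∅)
      = (cycUtil G i D : ℝ) + stepExp G Δ (fun P => (packUtil G i P : ℝ)) rest ∅ := by
  rw [stepExp_add G Δ i rest (insert D ∅) hrestcyc hpwrest ?_, packUtil_singleton]
  · intro B hB a ha
    rcases Finset.mem_insert.1 ha with rfl | ha'
    · exact hD B hB
    · simp at ha'

/-- The central incentive-compatibility estimate, per ordering. -/
lemma stepExp_mono (G : PartGraph n) (i : Fin n) (Γ' Γ : Params n)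
    (hle : ParamLE i Γ' Γ) :
    ∀ (l : List (List ℕ)),
      (∀ C ∈ l, IsCycle G C) →
      l.Pairwise (fun a b => ∀ v ∈ a, v ∉ b) →
      stepExp G Γ' (fun P => (packUtil G i P : ℝ)) l ∅
        ≤ stepExp G Γ (fun P => (packUtil G i P : ℝ)) l ∅ := by
  intro l
  induction l with
  | nil => intro _ _; simp [stepExp]
  | cons C rest ih =>
    intro hcyc hpw
    have hCcyc : IsCycle G C := hcyc C (List.mem_cons_self)
    have hrestcyc : ∀ B ∈ rest, IsCycle G B := fun B hB => hcyc B (List.mem_cons_of_mem _ hB)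
    have hpwC : ∀ b ∈ rest, ∀ v ∈ C, v ∉ b := (List.pairwise_cons.1 hpw).1
    have hpwrest := (List.pairwise_cons.1 hpw).2
    have IH := ih hrestcyc hpwrest
    have hrd : ∀ D : List ℕ, (∀ v ∈ D, v ∈ C) → ∀ B ∈ rest, ∀ v ∈ B, v ∉ D := by
      intro D hDsub B hB v hvB hvD
      exact hpwC B hB v (hDsub v hvD) hvB
    have hins : ∀ (Δ : Params n) (D : List ℕ), (∀ v ∈ D, v ∈ C) →
        stepExp G Δ (fun P => (packUtil G i P : ℝ)) rest (insert D ∅)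
          = (cycUtil G i D : ℝ) + stepExp G Δ (fun P => (packUtil G i P : ℝ)) rest ∅ :=
      fun Δ D hDsub => stepExp_insert_one G Δ i hrestcyc hpwrest (hrd D hDsub)
    have hsub' : ∀ D, D ∈ subList G Γ' C → D ∈ subList G Γ C := by
      intro D hD
      exact mem_subList.2 (subCond_mono hle (mem_subList.1 hD))
    have havg : ∀ (Δ : Params n), subList G Δ C ≠ [] →
        ((subList G Δ C).map
            (fun D => stepExp G Δ (fun P => (packUtil G i P : ℝ)) rest (insert D ∅))).sum /
            ((subList G Δ C).length : ℝ)
          = (∑ D ∈ (SubCond_finite G Δ C).toFinset, (cycUtil G i D : ℝ)) /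
              (((SubCond_finite G Δ C).toFinset.card : ℝ)) +
            stepExp G Δ (fun P => (packUtil G i P : ℝ)) rest ∅ := by
      intro Δ hne
      have hmap : (subList G Δ C).map
            (fun D => stepExp G Δ (fun P => (packUtil G i P : ℝ)) rest (insert D ∅))
          = (subList G Δ C).map
            (fun D => stepExp G Δ (fun P => (packUtil G i P : ℝ)) rest ∅ +
              (cycUtil G i D : ℝ)) := by
        apply List.map_congr_left
        intro D hD
        have hsc := mem_subList.1 hD
        rw [hins Δ D hsc.2.2.1]; ring
      have hlen : (0:ℝ) < ((subList G Δ C).length : ℝ) := by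
        have := List.length_pos_iff.2 hne; exact_mod_cast this
      rw [hmap, list_sum_map_const_add, add_div, mul_div_cancel_left₀ _ (ne_of_gt hlen)]
      rw [subList_toFinset, Finset.sum_map_toList, Finset.length_toList]
      ring
    simp only [stepExp]
    by_cases hg' : IsGammaCycle G Γ' C
    · have hg : IsGammaCycle G Γ C := gammaCycle_mono hle hg'
      rw [if_pos hg', if_pos hg, hins Γ' C (fun v hv => hv), hins Γ C (fun v hv => hv)]
      linarith
    · rw [if_neg hg']
      by_cases hg : IsGammaCycle G Γ C
      · -- Γ keeps C, Γ' substitutes or deletes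
        rw [if_pos hg, hins Γ C (fun v hv => hv)]
        by_cases hsl' : subList G Γ' C ≠ []
        · rw [if_pos hsl']
          refine list_map_avg_le hsl' (fun D hD => ?_)
          have hsc := mem_subList.1 hD
          rw [hins Γ' D hsc.2.2.1]
          have h1 : cycUtil G i D ≤ cycUtil G i C :=
            cycUtil_le_of_subset hsc.1.1.2.1 hCcyc.2.1 hsc.2.2.1
          have h2 : (cycUtil G i D : ℝ) ≤ (cycUtil G i C : ℝ) := by exact_mod_cast h1
          linarith
        · rw [if_neg hsl']
          have := cycUtil_nonneg G i C
          linarith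
      · -- neither keeps C
        rw [if_neg hg]
        by_cases hsl' : subList G Γ' C ≠ []
        · have hsl : subList G Γ C ≠ [] := by
            intro hc
            obtain ⟨D, hD⟩ := List.exists_mem_of_ne_nil _ hsl'
            exact absurd (hsub' D hD) (by simp [hc])
          rw [if_pos hsl', if_pos hsl, havg Γ' hsl', havg Γ hsl]
          have hSsub : (SubCond_finite G Γ' C).toFinset ⊆ (SubCond_finite G Γ C).toFinset := by
            intro D hD
            rw [Set.Finite.mem_toFinset] at hD ⊢
            exact subCond_mono hle hD
          have hSne : (SubCond_finite G Γ' C).toFinset.Nonempty := by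
            obtain ⟨D, hD⟩ := List.exists_mem_of_ne_nil _ hsl'
            exact ⟨D, by rw [subList_toFinset, Finset.mem_toList] at hD; exact hD⟩
          have hA := avg_le_avg hSsub hSne (fun D => (cycUtil G i D : ℝ)) ?_
          · linarith
          · intro a ha b hb hbn
            rw [Set.Finite.mem_toFinset] at ha hb
            have hbn' : ¬ SubCond G Γ' C b := by
              intro hc
              exact hbn (Set.Finite.mem_toFinset _ |>.2 hc)
            have := key_compare hle hb hbn' ha
            exact_mod_cast this
        · rw [if_neg hsl']
          by_cases hsl : subList G Γ C ≠ []
          · rw [if_pos hsl]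
            refine le_trans IH ?_
            refine le_list_map_avg hsl (fun D hD => ?_)
            have hsc := mem_subList.1 hD
            rw [hins Γ D hsc.2.2.1]
            have := cycUtil_nonneg G i D
            linarith
          · rw [if_neg hsl]; exact IH

end AuxIC

section AuxTop
variable {n : ℕ}

lemma greedy_mem : ∀ (ord acc : List (List ℕ)), ∀ C ∈ greedy acc ord, C ∈ acc ∨ C ∈ ord := by
  intro ord
  induction ord with
  | nil => intro acc C hC; simp [greedy] at hC; exact Or.inl hC
  | cons c rest ih =>
    intro acc C hC
    simp only [greedy] at hC
    split_ifs at hC with h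
    · rcases ih (c :: acc) C hC with h1 | h1
      · rcases List.mem_cons.1 h1 with rfl | h2
        · exact Or.inr (List.mem_cons_self)
        · exact Or.inl h2
      · exact Or.inr (List.mem_cons_of_mem _ h1)
    · rcases ih acc C hC with h1 | h1
      · exact Or.inl h1
      · exact Or.inr (List.mem_cons_of_mem _ h1)

lemma greedy_pairwise : ∀ (ord acc : List (List ℕ)),
    acc.Pairwise (fun a b => ∀ v ∈ a, v ∉ b) →
    (∀ a ∈ acc, ∀ b ∈ acc, a ≠ b → True) →  -- dummy
    (greedy acc ord).Pairwise (fun a b => ∀ v ∈ a, v ∉ b) := by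
  intro ord
  induction ord with
  | nil => intro acc h _; simpa [greedy] using h
  | cons c rest ih =>
    intro acc h hd
    simp only [greedy]
    split_ifs with hdf
    · refine ih (c :: acc) ?_ (by simp)
      refine List.pairwise_cons.2 ⟨?_, h⟩
      intro a ha v hv
      exact hdf a ha v hv
    · exact ih acc h (by simp)

lemma mem_XList {G : PartGraph n} {icl : ℕ∞} {avail : Finset ℕ} {l : List ℕ} :
    l ∈ XList G icl avail ↔ XCond G icl avail l := by
  rw [XList, Finset.mem_toList, Set.Finite.mem_toFinset]
  rfl

/-- every cycle in a greedy selection from a permutation of `𝒳(Ĝ)` satisfies `XCond` -/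
lemma greedy_XCond {G : PartGraph n} {icl : ℕ∞} {avail : Finset ℕ}
    {ord : List (List ℕ)} (hord : ord ∈ (XList G icl avail).permutations) :
    ∀ C ∈ greedy [] ord, XCond G icl avail C := by
  intro C hC
  rcases greedy_mem ord [] C hC with h | h
  · simp at h
  · exact mem_XList.1 ((List.mem_permutations.1 hord).mem_iff.1 h)

/-- `σ`'s choice is a Γ-packing -/
lemma natPacking_gamma {G : PartGraph n} {Γ : Params n} {P : Finset (List ℕ)}
    (h : IsNatPacking G Γ.ncl P) : IsGammaPackingG G Γ P := by
  refine ⟨h.1, fun l hl => ?_⟩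
  obtain ⟨i, hnat, hle⟩ := h.2 l hl
  exact ⟨h.1.1 l hl, Or.inl ⟨i, hnat, hle⟩⟩

/-- cycles with vertices in `avail` are vertex-disjoint from the pre-selected packing -/
lemma avail_disj {G : PartGraph n} {Cnat : Finset (List ℕ)} {C : List ℕ}
    (hC : ∀ v ∈ C, v ∈ G.verts \ Cnat.biUnion List.toFinset) :
    ∀ a ∈ Cnat, ∀ v ∈ C, v ∉ a := by
  intro a ha v hv hva
  have := (Finset.mem_sdiff.1 (hC v hv)).2
  exact this (Finset.mem_biUnion.2 ⟨a, ha, List.mem_toFinset.2 hva⟩)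

lemma perms_ne_nil {α : Type*} (L : List α) : L.permutations ≠ [] := by
  intro h
  have := List.length_permutations L
  rw [h] at this
  simp at this
  exact absurd this.symm (Nat.factorial_ne_zero _)

/-- the exchange argument for individual rationality -/
lemma natSize_le_packUtil (I : IKEP) (i : Fin I.n) {Cnat : Finset (List ℕ)}
    (hmax : IsMaxNatPacking I.G I.prm.ncl Cnat) :
    natSize I i ≤ packUtil I.G i Cnat := by
  apply csSup_le
  · exact ⟨0, ∅, ⟨by simp [IsPacking], by simp⟩, by simp, by simp, by simp [packSize]⟩
  · rintro m ⟨P, hP, hPnat, hPncl, rfl⟩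
    classical
    set A := Cnat.filter (fun l => IsNationalTo I.G l i) with hA
    set B := Cnat.filter (fun l => ¬ IsNationalTo I.G l i) with hB
    have hBnoti : ∀ l ∈ B, ∀ v ∈ l, I.G.country v ≠ i := by
      intro l hl v hv
      rw [hB, Finset.mem_filter] at hl
      obtain ⟨hlC, hlni⟩ := hl
      obtain ⟨h, hnat, _⟩ := hmax.1.2 l hlC
      have hne : h ≠ i := by
        intro hcon
        exact hlni (hcon ▸ hnat)
      rw [hnat v hv]
      exact hne
    have hdisjBP : Disjoint B P := by
      rw [Finset.disjoint_left]
      intro l hlB hlP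
      obtain ⟨v, hv⟩ := List.exists_mem_of_ne_nil l
        (cycle_ne_nil (hmax.1.1.1 l (Finset.mem_of_mem_filter l hlB)))
      exact hBnoti l hlB v hv (hPnat l hlP v hv)
    have hQ : IsNatPacking I.G I.prm.ncl (B ∪ P) := by
      refine ⟨⟨?_, ?_⟩, ?_⟩
      · intro l hl
        rcases Finset.mem_union.1 hl with h | h
        · exact hmax.1.1.1 l (Finset.mem_of_mem_filter l h)
        · exact hP.1 l h
      · intro l hl l' hl' hne v hv
        rcases Finset.mem_union.1 hl with h1 | h1 <;>
          rcases Finset.mem_union.1 hl' with h2 | h2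
        · exact hmax.1.1.2 l (Finset.mem_of_mem_filter l h1) l'
            (Finset.mem_of_mem_filter l' h2) hne v hv
        · intro hv'
          exact hBnoti l h1 v hv (hPnat l' h2 v hv')
        · intro hv'
          exact hBnoti l' h2 v hv' (hPnat l h1 v hv)
        · exact hP.2 l h1 l' h2 hne v hv
      · intro l hl
        rcases Finset.mem_union.1 hl with h | h
        · exact hmax.1.2 l (Finset.mem_of_mem_filter l h)
        · exact ⟨i, hPnat l h, hPncl l h⟩
    have hsize := hmax.2 _ hQ
    have hBP : packSize (B ∪ P) = packSize B + packSize P := by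
      rw [packSize, packSize, packSize, Finset.sum_union hdisjBP]
    have hCnatsplit : packSize Cnat = packSize A + packSize B := by
      rw [packSize, packSize, packSize, hA, hB]
      exact (Finset.sum_filter_add_sum_filter_not Cnat _ _).symm
    have hAle : packSize A ≤ packUtil I.G i Cnat := by
      have h1 : packSize A = ∑ l ∈ A, cycUtil I.G i l := by
        apply Finset.sum_congr rfl
        intro l hl
        rw [hA, Finset.mem_filter] at hl
        unfold cycUtil
        rw [List.filter_eq_self.2 (fun v hv => by simpa using hl.2 v hv)]
      calc packSize A = ∑ l ∈ A, cycUtil I.G i l := h1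
        _ ≤ packUtil I.G i Cnat :=
          Finset.sum_le_sum_of_subset (Finset.filter_subset _ _)
    omega
end AuxTop


/-- For every pre-selection function `σ`, `ℳ_order` is a
mechanism — with probability `1` it returns a `Γ`-cycle packing of `G` — and
it is individually rational and incentive compatible (with respect to segment
size and segment number). -/
theorem Morder_is_mechanism_IR_and_IC (σ : PreSelection) :
    (∀ I : IKEP,
        MorderExp σ I (fun P => if IsGammaPacking I P then (1 : ℝ) else 0) = 1) ∧
      (∀ I : IKEP, ∀ i : Fin I.n, (natSize I i : ℝ) ≤ MorderU σ I i) ∧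
      (∀ I : IKEP, ∀ i : Fin I.n, ∀ Γ' : Params I.n, ParamLE i Γ' I.prm →
        MorderU σ { I with prm := Γ' } i ≤ MorderU σ I i) := by
  have hGreedyCyc : ∀ (I : IKEP) (avail : Finset ℕ) (ord : List (List ℕ)),
      ord ∈ (XList I.G I.prm.icl avail).permutations →
      (∀ C ∈ greedy [] ord, IsCycle I.G C) ∧
      (greedy [] ord).Pairwise (fun a b => ∀ v ∈ a, v ∉ b) ∧
      (∀ C ∈ greedy [] ord, ∀ v ∈ C, v ∈ avail) := by
    intro I avail ord hord
    refine ⟨fun C hC => (greedy_XCond hord C hC).1, ?_,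
      fun C hC => (greedy_XCond hord C hC).2.1⟩
    exact greedy_pairwise ord [] (by simp) (by simp)
  refine ⟨?_, ?_, ?_⟩
  · -- Mechanism: probability 1 of a Γ-packing
    intro I
    have hmax := σ.isMax I.n I.G I.prm.ncl
    have hCg : IsGammaPackingG I.G I.prm (σ.sel I.n I.G I.prm.ncl) :=
      natPacking_gamma hmax.1
    simp only [MorderExp, MorderExpFrom]
    refine list_map_avg_eq_one (perms_ne_nil _) (fun ord hord => ?_)
    obtain ⟨h1, h2, h3⟩ := hGreedyCyc I _ ord hord
    refine stepExp_packing I.G I.prm _ (fun P hP => if_pos hP) (greedy [] ord) _ hCg h1 h2 ?_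
    intro C hC a ha
    exact avail_disj (fun v hv => h3 C hC v hv) a ha
  · -- Individual rationality
    intro I i
    have hmax := σ.isMax I.n I.G I.prm.ncl
    have h1 := natSize_le_packUtil I i hmax
    simp only [MorderU, MorderExp, MorderExpFrom]
    refine le_trans (show (natSize I i : ℝ) ≤
      (packUtil I.G i (σ.sel I.n I.G I.prm.ncl) : ℝ) by exact_mod_cast h1) ?_
    refine le_list_map_avg (perms_ne_nil _) (fun ord hord => ?_)
    exact le_stepExp I.G I.prm i (greedy [] ord) _
  · -- Incentive compatibility
    intro I i Γ' hle
    have hncl : Γ'.ncl = I.prm.ncl := hle.2.1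
    have hicl : Γ'.icl = I.prm.icl := hle.1
    simp only [MorderU, MorderExp, MorderExpFrom, hncl, hicl]
    have hlen : (0:ℝ) <
        (((XList I.G I.prm.icl (I.G.verts \ (σ.sel I.n I.G I.prm.ncl).biUnion
          List.toFinset)).permutations).length : ℝ) := by
      have := List.length_pos_iff.2 (perms_ne_nil (XList I.G I.prm.icl
        (I.G.verts \ (σ.sel I.n I.G I.prm.ncl).biUnion List.toFinset)))
      exact_mod_cast this
    rw [div_le_div_iff_of_pos_right hlen]
    refine List.sum_le_sum (fun ord hord => ?_)
    obtain ⟨h1, h2, h3⟩ := hGreedyCyc I _ ord hord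
    have hdisj : ∀ C ∈ greedy [] ord, ∀ a ∈ σ.sel I.n I.G I.prm.ncl, ∀ v ∈ C, v ∉ a :=
      fun C hC a ha => avail_disj (fun v hv => h3 C hC v hv) a ha
    rw [stepExp_add I.G Γ' i _ _ h1 h2 hdisj,
      stepExp_add I.G I.prm i _ _ h1 h2 hdisj]
    exact add_le_add_right (stepExp_mono I.G i Γ' I.prm hle _ h1 h2) _
end

section
/- The bound max{c_int, d*} on the approximation ratio of ℳ_order is tight: for every integer c ≥ 2 there exists an IKEP instance I whose compatibility graph contains an international Γ-cycle, with max{c_int(I), d*(I)} = c, such that for every pre-selection function σ one has opt(I) = c · SW(ℳ_order(I)). -/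
open scoped Classical

/-- The set of arcs of a cycle `l` (this determines the cycle up to rotation
of the list representation). -/
def arcSetOf (l : List ℕ) : Finset (ℕ × ℕ) :=
  (Finset.range l.length).image fun k => (cyc l k, cyc l (k + 1))

/-- The international cycle degree `d(C)` of an international `Γ`-cycle `C`:
the number of (distinct) international `Γ`-cycles of `G` sharing at least one
vertex with `C` (`C` itself included); cycles are counted via their arc sets,
i.e. up to rotation of their list representations. -/
noncomputable def intlDeg (I : IKEP) (C : List ℕ) : ℕ :=
  {S : Finset (ℕ × ℕ) | ∃ l, IsIntlGammaCycle I l ∧ arcSetOf l = S ∧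
    ∃ v ∈ l, v ∈ C}.ncard

/-- `d*(I)`: the maximum international cycle degree over all international
`Γ`-cycles of `G`. -/
noncomputable def dStar (I : IKEP) : ℕ :=
  sSup {d | ∃ C, IsIntlGammaCycle I C ∧ intlDeg I C = d}


/-! ### Construction for tightness -/

namespace TightCons

open scoped Nat

/-- Vertex set of the tight instance. -/
def tverts (c : ℕ) : Finset ℕ := Finset.range (3 * c - 2)

/-- Arc predicate of the tight instance. -/
def ArcP (c : ℕ) (v w : ℕ) : Prop :=
  (v + 1 < c ∧ w = v + 1) ∨ (v = c - 1 ∧ w = 0) ∨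
  (v = 0 ∧ c ≤ w ∧ (w - c) % 2 = 0) ∨
  (c ≤ v ∧ (v - c) % 2 = 0 ∧ w = v + 1) ∨
  (c ≤ v ∧ (v - c) % 2 = 1 ∧ w = 0)

/-- Countries of the tight instance. -/
def tcountry (c : ℕ) (v : ℕ) : Fin 3 := if v = 0 then 0 else if v < c then 1 else 2

/-- The compatibility graph of the tight instance. -/
noncomputable def Gg (c : ℕ) (hc : 2 ≤ c) : PartGraph 3 where
  verts := tverts c
  arcs := (tverts c ×ˢ tverts c).filter fun p => ArcP c p.1 p.2
  arcs_mem := by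
    intro p hp
    exact Finset.mem_product.mp (Finset.mem_filter.mp hp).1
  no_loops := by
    intro v hv
    obtain ⟨-, h⟩ := Finset.mem_filter.mp hv
    rcases h with ⟨h1, h2⟩ | ⟨h1, h2⟩ | ⟨h1, h2, h3⟩ | ⟨h1, h2, h3⟩ | ⟨h1, h2, h3⟩ <;> omega
  country := tcountry c
  country_nonempty := by
    intro i
    fin_cases i
    · exact ⟨0, Finset.mem_range.mpr (by omega), by simp [tcountry]⟩
    · refine ⟨1, Finset.mem_range.mpr (by omega), ?_⟩
      simp only [tcountry]
      rw [if_neg (by omega), if_pos (by omega)]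
      rfl
    · refine ⟨c, Finset.mem_range.mpr (by omega), ?_⟩
      simp only [tcountry]
      rw [if_neg (by omega), if_neg (by omega)]
      rfl

lemma mem_arcs {c : ℕ} {hc : 2 ≤ c} {v w : ℕ} :
    (v, w) ∈ (Gg c hc).arcs ↔ v < 3 * c - 2 ∧ w < 3 * c - 2 ∧ ArcP c v w := by
  simp [Gg, tverts, Finset.mem_filter, Finset.mem_product, and_assoc]

/-- The parameters of the tight instance. -/
noncomputable def Γps : Params 3 where
  icl := ⊤
  ncl := fun _ => 0
  iss := fun i => if i = 2 then 1 else ⊤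
  isn := fun _ => ⊤
  icl_ne_one := by simp
  ncl_ne_one := by intro i; simp
  iss_pos := by intro i; by_cases h : i = 2 <;> simp [h]
  isn_pos := fun i => le_top

/-- The tight instance. -/
noncomputable def Ii (c : ℕ) (hc : 2 ≤ c) : IKEP := ⟨3, by norm_num, Gg c hc, Γps⟩

/-- The unique international Γ-cycle (canonical representative). -/
def Dl (c : ℕ) : List ℕ := List.range c

/-- The bad cycles (canonical representatives). -/
def Bl (c j : ℕ) : List ℕ := [0, c + 2 * j, c + 2 * j + 1]

@[simp] lemma length_Dl (c : ℕ) : (Dl c).length = c := List.length_range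
@[simp] lemma length_Bl (c j : ℕ) : (Bl c j).length = 3 := rfl

/-! #### Generic facts about `cyc` -/

lemma cyc_congr {l : List ℕ} {m m' : ℕ} (h : m % l.length = m' % l.length) :
    cyc l m = cyc l m' := by
  unfold cyc; rw [h]

lemma cyc_mem {l : List ℕ} (hne : l ≠ []) (m : ℕ) : cyc l m ∈ l := by
  have hpos : 0 < l.length := List.length_pos_iff.mpr hne
  have h : m % l.length < l.length := Nat.mod_lt _ hpos
  rw [cyc, List.getD_eq_getElem _ _ h]
  exact List.getElem_mem h

lemma cyc_eq_getElem {l : List ℕ} {k : ℕ} (h : k < l.length) : cyc l k = l[k] := by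
  rw [cyc, Nat.mod_eq_of_lt h, List.getD_eq_getElem _ _ h]

lemma cyc_inj {l : List ℕ} (hnd : l.Nodup) {j k : ℕ} (hj : j < l.length)
    (hk : k < l.length) (h : cyc l j = cyc l k) : j = k := by
  rw [cyc_eq_getElem hj, cyc_eq_getElem hk] at h
  exact (List.Nodup.getElem_inj_iff hnd).mp h

lemma cyc_inj_mod {l : List ℕ} (hnd : l.Nodup) (hpos : 0 < l.length) {j k : ℕ}
    (h : cyc l j = cyc l k) : j % l.length = k % l.length := by
  have h1 : cyc l (j % l.length) = cyc l (k % l.length) := by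
    rw [cyc_congr (Nat.mod_mod_of_dvd j dvd_rfl), cyc_congr (Nat.mod_mod_of_dvd k dvd_rfl)]
    exact h
  exact cyc_inj hnd (Nat.mod_lt _ hpos) (Nat.mod_lt _ hpos) h1

lemma arcs_all {n : ℕ} {G : PartGraph n} {l : List ℕ} (h : IsCycle G l) (m : ℕ) :
    (cyc l m, cyc l (m + 1)) ∈ G.arcs := by
  have hpos : 0 < l.length := by have := h.1; omega
  have h1 := h.2.2.2 (m % l.length) (Nat.mod_lt _ hpos)
  have e1 : cyc l m = cyc l (m % l.length) :=
    cyc_congr (Nat.mod_mod_of_dvd m dvd_rfl).symm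
  have e2 : cyc l (m + 1) = cyc l (m % l.length + 1) := by
    apply cyc_congr
    have h2 : (m % l.length + 1) % l.length = (m + 1) % l.length :=
      Nat.ModEq.add_right 1 (Nat.mod_modEq m l.length)
    exact h2.symm
  rw [e1, e2]
  exact h1

/-! #### No cycle avoids vertex `0` -/

/-- Rank function decreasing along arcs between nonzero vertices. -/
def rho (c v : ℕ) : ℕ := if v < c then c - v else 2 - (v - c) % 2

lemma rho_dec {c : ℕ} {hc : 2 ≤ c} {v w : ℕ} (h : (v, w) ∈ (Gg c hc).arcs)
    (hv : v ≠ 0) (hw : w ≠ 0) : rho c w < rho c v := by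
  obtain ⟨hv1, hw1, hA⟩ := mem_arcs.mp h
  rcases hA with ⟨h1, h2⟩ | ⟨h1, h2⟩ | ⟨h1, h2, h3⟩ | ⟨h1, h2, h3⟩ | ⟨h1, h2, h3⟩
  · subst h2; unfold rho
    rw [if_pos (by omega), if_pos (by omega)]
    omega
  · omega
  · omega
  · subst h3; unfold rho
    rw [if_neg (by omega), if_neg (by omega)]
    have e1 : (v + 1 - c) % 2 = 1 := by omega
    omega
  · omega

lemma zero_mem_of_cycle {c : ℕ} {hc : 2 ≤ c} {l : List ℕ} (h : IsCycle (Gg c hc) l) :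
    (0 : ℕ) ∈ l := by
  by_contra h0
  have hne : l ≠ [] := by intro e; have := h.1; rw [e] at this; simp at this
  have key : ∀ k : ℕ, rho c (cyc l k) + k ≤ rho c (cyc l 0) := by
    intro k
    induction k with
    | zero => simp
    | succ k ih =>
      have harc := arcs_all h k
      have hv : cyc l k ≠ 0 := fun e => h0 (e ▸ cyc_mem hne k)
      have hw : cyc l (k + 1) ≠ 0 := fun e => h0 (e ▸ cyc_mem hne (k + 1))
      have := rho_dec (hc := hc) harc hv hw
      omega
  have := key (rho c (cyc l 0) + 1)
  omega

/-! #### Classification of the cycles of the graph -/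

lemma classify {c : ℕ} {hc : 2 ≤ c} {l : List ℕ} (h : IsCycle (Gg c hc) l) :
    ∃ r < l.length, cyc l r = 0 ∧
      ((l.length = c ∧ ∀ k, cyc l (r + k) = k % c) ∨
       (∃ j < c - 1, l.length = 3 ∧ ∀ k, cyc l (r + k) = cyc (Bl c j) k)) := by
  have hlen2 : 2 ≤ l.length := h.1
  have hpos : 0 < l.length := by omega
  have hnd : l.Nodup := h.2.1
  have hne : l ≠ [] := by intro e; rw [e] at hpos; simp at hpos
  obtain ⟨r, hr, hr0⟩ := List.mem_iff_getElem.mp (zero_mem_of_cycle (hc := hc) h)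
  have hcyc_r : cyc l r = 0 := by rw [cyc_eq_getElem hr]; exact hr0
  refine ⟨r, hr, hcyc_r, ?_⟩
  have inj : ∀ {a b : ℕ}, cyc l a = cyc l b → a % l.length = b % l.length :=
    fun hab => cyc_inj_mod hnd hpos hab
  have harc1 := arcs_all h r
  rw [hcyc_r] at harc1
  obtain ⟨-, hwv, hA⟩ := mem_arcs.mp harc1
  rcases hA with ⟨h1, h2⟩ | ⟨h1, h2⟩ | ⟨h1, h2, h3⟩ | ⟨h1, h2, h3⟩ | ⟨h1, h2, h3⟩
  · -- D-branch : `cyc l (r+1) = 1`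
    left
    have key : ∀ k, k < l.length → cyc l (r + k) = k ∧ k < c := by
      intro k
      induction k with
      | zero => intro _; exact ⟨by simpa using hcyc_r, by omega⟩
      | succ k ih =>
        intro hk1
        obtain ⟨hck, hkc⟩ := ih (by omega)
        by_cases hk0 : k = 0
        · subst hk0
          refine ⟨?_, by omega⟩
          simpa using h2
        · have harc := arcs_all h (r + k)
          obtain ⟨-, -, hA2⟩ := mem_arcs.mp harc
          rw [hck] at hA2
          rcases hA2 with ⟨p1, p2⟩ | ⟨p1, p2⟩ | ⟨p1, p2, p3⟩ | ⟨p1, p2, p3⟩ | ⟨p1, p2, p3⟩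
          · exact ⟨by rw [show r + (k + 1) = r + k + 1 by ring, p2], by omega⟩
          · exfalso
            have e := inj (p2.trans hcyc_r.symm)
            have hdvd : l.length ∣ (r + k + 1) - r :=
              (Nat.modEq_iff_dvd' (by omega)).mp e.symm
            have : l.length ∣ k + 1 := by
              rw [show r + k + 1 - r = k + 1 by omega] at hdvd; exact hdvd
            have := Nat.le_of_dvd (by omega) this
            omega
          · omega
          · omega
          · omega
    have hlast := key (l.length - 1) (by omega)
    have harc := arcs_all h (r + (l.length - 1))
    have hnext : cyc l (r + (l.length - 1) + 1) = cyc l r := by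
      apply cyc_congr
      have e : r + (l.length - 1) + 1 = r + l.length := by omega
      rw [e, Nat.add_mod_right]
    rw [hlast.1, hnext, hcyc_r] at harc
    obtain ⟨-, -, hA3⟩ := mem_arcs.mp harc
    have hlenc : l.length = c := by
      rcases hA3 with ⟨p1, p2⟩ | ⟨p1, p2⟩ | ⟨p1, p2, p3⟩ | ⟨p1, p2, p3⟩ | ⟨p1, p2, p3⟩ <;>
        first
        | omega
        | (exfalso; have := hlast.2; omega)
    refine ⟨hlenc, fun k => ?_⟩
    have e1 : cyc l (r + k) = cyc l (r + k % c) := by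
      apply cyc_congr
      rw [hlenc]
      exact ((Nat.mod_modEq k c).symm.add_left r)
    rw [e1, (key _ (by rw [hlenc]; exact Nat.mod_lt _ (by omega))).1]
  · omega
  · -- B-branch
    right
    obtain ⟨j, hj, hwj⟩ : ∃ j, j < c - 1 ∧ cyc l (r + 1) = c + 2 * j :=
      ⟨(cyc l (r + 1) - c) / 2, by omega, by omega⟩
    refine ⟨j, hj, ?_⟩
    have harc2 := arcs_all h (r + 1)
    obtain ⟨-, -, hA2⟩ := mem_arcs.mp harc2
    have h2nd : cyc l (r + 2) = cyc l (r + 1) + 1 := by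
      rcases hA2 with ⟨p1, p2⟩ | ⟨p1, p2⟩ | ⟨p1, p2, p3⟩ | ⟨p1, p2, p3⟩ | ⟨p1, p2, p3⟩ <;>
        first
        | omega
        | (rw [show r + 2 = r + 1 + 1 by ring]; omega)
    have harc3 := arcs_all h (r + 2)
    obtain ⟨-, -, hA3⟩ := mem_arcs.mp harc3
    rw [h2nd] at hA3
    have h3rd : cyc l (r + 3) = 0 := by
      rcases hA3 with ⟨p1, p2⟩ | ⟨p1, p2⟩ | ⟨p1, p2, p3⟩ | ⟨p1, p2, p3⟩ | ⟨p1, p2, p3⟩ <;>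
        first
        | omega
        | (rw [show r + 3 = r + 2 + 1 by ring]; omega)
    have e := inj (h3rd.trans hcyc_r.symm)
    have hdvd : l.length ∣ (r + 3) - r := (Nat.modEq_iff_dvd' (by omega)).mp e.symm
    have hdvd3 : l.length ∣ 3 := by simpa using hdvd
    have hlen3 : l.length = 3 := by
      rcases (Nat.Prime.eq_one_or_self_of_dvd Nat.prime_three _ hdvd3) with e3 | e3 <;> omega
    refine ⟨hlen3, fun k => ?_⟩
    have e1 : cyc l (r + k) = cyc l (r + k % 3) := by
      apply cyc_congr
      rw [hlen3]
      exact ((Nat.mod_modEq k 3).symm.add_left r)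
    have hk3 : k % 3 = 0 ∨ k % 3 = 1 ∨ k % 3 = 2 := by omega
    have hBcyc : cyc (Bl c j) k = (Bl c j).getD (k % 3) 0 := rfl
    rcases hk3 with e | e | e <;> rw [e1, e, hBcyc, e]
    · simpa [Bl] using hcyc_r
    · simpa [Bl] using hwj
    · rw [show (Bl c j).getD 2 0 = c + 2 * j + 1 from rfl, h2nd, hwj]
  · omega
  · omega

/-! #### The cycles `Dl` and `Bl` -/

lemma cyc_Dl {c : ℕ} (hc : 2 ≤ c) (k : ℕ) : cyc (Dl c) k = k % c := by
  have hk : k % c < c := Nat.mod_lt _ (by omega)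
  rw [cyc, Dl, List.length_range, List.getD_eq_getElem _ _ (by simpa using hk),
    List.getElem_range]

lemma Dl_cycle {c : ℕ} (hc : 2 ≤ c) : IsCycle (Gg c hc) (Dl c) := by
  refine ⟨by simpa using hc, by rw [Dl]; exact List.nodup_range, ?_, ?_⟩
  · intro v hv
    rw [Dl, List.mem_range] at hv
    exact Finset.mem_range.mpr (by omega)
  · intro k hk
    rw [length_Dl] at hk
    rw [cyc_Dl hc, cyc_Dl hc, Nat.mod_eq_of_lt hk]
    rw [mem_arcs]
    by_cases hk1 : k + 1 < c
    · rw [Nat.mod_eq_of_lt hk1]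
      exact ⟨by omega, by omega, Or.inl ⟨hk1, rfl⟩⟩
    · have e : k = c - 1 := by omega
      have e2 : (k + 1) % c = 0 := by
        have : k + 1 = c := by omega
        simp [this]
      rw [e2]
      exact ⟨by omega, by omega, Or.inr (Or.inl ⟨e, rfl⟩)⟩

lemma country_zero {c : ℕ} : tcountry c 0 = 0 := by simp [tcountry]

lemma country_mid {c v : ℕ} (h0 : v ≠ 0) (h : v < c) : tcountry c v = 1 := by
  simp only [tcountry]; rw [if_neg h0, if_pos h]

lemma country_hi {c v : ℕ} (hc : 2 ≤ c) (h : c ≤ v) : tcountry c v = 2 := by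
  simp only [tcountry]; rw [if_neg (by omega), if_neg (by omega)]

lemma Dl_intl {c : ℕ} (hc : 2 ≤ c) : IsInternational (Gg c hc) (Dl c) := by
  rintro ⟨i, hi⟩
  have h0 := hi 0 (by simp [Dl]; omega)
  have h1 := hi 1 (by simp [Dl]; omega)
  have e0 : tcountry c 0 = i := h0
  have e1 : tcountry c 1 = i := h1
  rw [country_zero] at e0
  rw [country_mid (by omega) (by omega)] at e1
  rw [← e0] at e1
  exact absurd e1 (by decide)

lemma Dl_gamma {c : ℕ} (hc : 2 ≤ c) : IsGammaCycle (Gg c hc) Γps (Dl c) := by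
  refine ⟨Dl_cycle hc, Or.inr ⟨Dl_intl hc, le_top, ?_, fun i => le_top⟩⟩
  intro i k hk hseg
  by_cases hi : i = 2
  · exfalso
    subst hi
    have h1 := hseg.1
    rw [length_Dl] at hk
    have e : cyc (Dl c) k = k := by rw [cyc_Dl hc, Nat.mod_eq_of_lt hk]
    rw [e] at h1
    have h1' : tcountry c k = 2 := h1
    by_cases hk0 : k = 0
    · subst hk0; rw [country_zero] at h1'; exact absurd h1' (by decide)
    · rw [country_mid hk0 hk] at h1'; exact absurd h1' (by decide)
  · have : Γps.iss i = ⊤ := by simp [Γps, hi]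
    rw [this]; exact le_top

lemma Bl_cycle {c : ℕ} (hc : 2 ≤ c) {j : ℕ} (hj : j < c - 1) :
    IsCycle (Gg c hc) (Bl c j) := by
  refine ⟨by simp, by simp [Bl]; omega, ?_, ?_⟩
  · intro v hv
    simp only [Bl, List.mem_cons, List.mem_singleton] at hv
    rcases hv with rfl | rfl | rfl | h
    · exact Finset.mem_range.mpr (by omega)
    · exact Finset.mem_range.mpr (by omega)
    · exact Finset.mem_range.mpr (by omega)
    · simp at h
  · intro k hk
    rw [length_Bl] at hk
    have e0 : cyc (Bl c j) 0 = 0 := rfl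
    have e1 : cyc (Bl c j) 1 = c + 2 * j := rfl
    have e2 : cyc (Bl c j) 2 = c + 2 * j + 1 := rfl
    have e3 : cyc (Bl c j) 3 = 0 := by simp [cyc, Bl]
    interval_cases k
    · rw [show (0:ℕ) + 1 = 1 from rfl, e0, e1, mem_arcs]
      exact ⟨by omega, by omega, Or.inr (Or.inr (Or.inl ⟨rfl, by omega, by omega⟩))⟩
    · rw [show (1:ℕ) + 1 = 2 from rfl, e1, e2, mem_arcs]
      exact ⟨by omega, by omega, Or.inr (Or.inr (Or.inr (Or.inl ⟨by omega, by omega, rfl⟩)))⟩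
    · rw [show (2:ℕ) + 1 = 3 from rfl, e2, e3, mem_arcs]
      exact ⟨by omega, by omega, Or.inr (Or.inr (Or.inr (Or.inr ⟨by omega, by omega, rfl⟩)))⟩

lemma Bl_intl {c : ℕ} (hc : 2 ≤ c) {j : ℕ} (hj : j < c - 1) :
    IsInternational (Gg c hc) (Bl c j) := by
  rintro ⟨i, hi⟩
  have h0 : tcountry c 0 = i := hi 0 (by simp [Bl])
  have h1 : tcountry c (c + 2 * j) = i := hi (c + 2 * j) (by simp [Bl])
  rw [country_zero] at h0
  rw [country_hi hc (by omega)] at h1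
  rw [← h0] at h1
  exact absurd h1 (by decide)

/-- Any rotation of a bad cycle is not a `Γ`-cycle. -/
lemma rot_B_not_gamma {c : ℕ} (hc : 2 ≤ c) {j r : ℕ} (hj : j < c - 1) {l : List ℕ}
    (hlen : l.length = 3) (H : ∀ k, cyc l (r + k) = cyc (Bl c j) k) :
    ¬ IsGammaCycle (Gg c hc) Γps l := by
  rintro ⟨hcyc, hnat | ⟨-, -, hiss, -⟩⟩
  · obtain ⟨i, -, hle⟩ := hnat
    rw [hlen] at hle
    have : Γps.ncl i = 0 := rfl
    rw [this] at hle
    simp at hle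
  · set k0 := (r + 1) % 3 with hk0def
    have hk0 : k0 < l.length := by rw [hlen]; omega
    have hshift : ∀ t, cyc l (k0 + t) = cyc l (r + 1 + t) := by
      intro t
      apply cyc_congr
      rw [hlen]
      exact (Nat.mod_modEq (r + 1) 3).add_right t
    have hB1 : cyc (Bl c j) 1 = c + 2 * j := rfl
    have hB2 : cyc (Bl c j) 2 = c + 2 * j + 1 := rfl
    have hB3 : cyc (Bl c j) 3 = 0 := by simp [cyc, Bl]
    have hv1 : cyc l k0 = c + 2 * j := by
      have := hshift 0
      simp only [Nat.add_zero] at this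
      rw [this, H 1, hB1]
    have hv2 : cyc l (k0 + 1) = c + 2 * j + 1 := by
      rw [hshift 1, show r + 1 + 1 = r + 2 by ring, H 2, hB2]
    have hv3 : cyc l (k0 + 2) = 0 := by
      rw [hshift 2, show r + 1 + 2 = r + 3 by ring, H 3, hB3]
    have hseg : segStart (Gg c hc) l 2 k0 := by
      constructor
      · show tcountry c (cyc l k0) = 2
        rw [hv1]; exact country_hi hc (by omega)
      · show tcountry c (cyc l (k0 + l.length - 1)) ≠ 2
        rw [hlen, show k0 + 3 - 1 = k0 + 2 by omega, hv3, country_zero]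
        decide
    have hle := hiss 2 k0 hk0 hseg
    have hiss2 : Γps.iss 2 = 1 := rfl
    rw [hiss2] at hle
    have hrun : 2 ≤ runLen (Gg c hc) l 2 k0 := by
      have hsub : ({0, 1} : Finset ℕ) ⊆ (Finset.range l.length).filter
          (fun t => ∀ t' ≤ t, (Gg c hc).country (cyc l (k0 + t')) = 2) := by
        intro t ht
        simp only [Finset.mem_insert, Finset.mem_singleton] at ht
        rcases ht with rfl | rfl
        · refine Finset.mem_filter.mpr ⟨Finset.mem_range.mpr (by omega), ?_⟩
          intro t' ht'
          have : t' = 0 := by omega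
          subst this
          show tcountry c (cyc l (k0 + 0)) = 2
          simp only [Nat.add_zero]
          rw [hv1]; exact country_hi hc (by omega)
        · refine Finset.mem_filter.mpr ⟨Finset.mem_range.mpr (by omega), ?_⟩
          intro t' ht'
          have : t' = 0 ∨ t' = 1 := by omega
          rcases this with rfl | rfl
          · show tcountry c (cyc l (k0 + 0)) = 2
            simp only [Nat.add_zero]
            rw [hv1]; exact country_hi hc (by omega)
          · show tcountry c (cyc l (k0 + 1)) = 2
            rw [hv2]; exact country_hi hc (by omega)
      calc (2 : ℕ) = ({0, 1} : Finset ℕ).card := by decide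
        _ ≤ _ := Finset.card_le_card hsub
    rw [runLen] at hrun
    have : (runLen (Gg c hc) l 2 k0 : ℕ∞) ≤ 1 := hle
    rw [show (1 : ℕ∞) = ((1 : ℕ) : ℕ∞) from rfl, Nat.cast_le] at this
    rw [runLen] at this
    omega

lemma Bl_not_gamma {c : ℕ} (hc : 2 ≤ c) {j : ℕ} (hj : j < c - 1) :
    ¬ IsGammaCycle (Gg c hc) Γps (Bl c j) :=
  rot_B_not_gamma hc hj (r := 0) rfl (fun k => by rw [Nat.zero_add])

/-- Every `Γ`-cycle is a rotation of `Dl`. -/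
lemma gamma_classify {c : ℕ} {hc : 2 ≤ c} {l : List ℕ}
    (hg : IsGammaCycle (Gg c hc) Γps l) :
    ∃ r < l.length, cyc l r = 0 ∧ l.length = c ∧ ∀ k, cyc l (r + k) = k % c := by
  obtain ⟨r, hr, h0, hD | ⟨j, hj, hlen, H⟩⟩ := classify hg.1
  · exact ⟨r, hr, h0, hD.1, hD.2⟩
  · exact absurd hg (rot_B_not_gamma hc hj hlen H)

lemma gamma_len {c : ℕ} {hc : 2 ≤ c} {l : List ℕ}
    (hg : IsGammaCycle (Gg c hc) Γps l) : l.length = c := by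
  obtain ⟨r, -, -, hlen, -⟩ := gamma_classify hg
  exact hlen

lemma gamma_one_mem {c : ℕ} {hc : 2 ≤ c} {l : List ℕ}
    (hg : IsGammaCycle (Gg c hc) Γps l) : (1 : ℕ) ∈ l := by
  obtain ⟨r, hr, h0, hlen, H⟩ := gamma_classify hg
  have hne : l ≠ [] := by intro e; rw [e] at hlen; simp at hlen; omega
  have h1 : cyc l (r + 1) = 1 := by rw [H 1, Nat.mod_eq_of_lt (by omega)]
  exact h1 ▸ cyc_mem hne (r + 1)

/-- Index shift: `k ↦ (r + k) % n` is surjective mod `n`. -/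
lemma shift_surj {n : ℕ} (hn : 0 < n) (r m : ℕ) : ∃ k < n, (r + k) % n = m % n := by
  have hdm := Nat.div_add_mod r n
  have hrlt := Nat.mod_lt r hn
  have hmlt := Nat.mod_lt m hn
  by_cases hle : r % n ≤ m % n
  · refine ⟨m % n - r % n, by omega, ?_⟩
    have e : r + (m % n - r % n) = m % n + n * (r / n) := by omega
    rw [e, Nat.add_mul_mod_self_left, Nat.mod_mod_of_dvd _ dvd_rfl]
  · refine ⟨m % n + n - r % n, by omega, ?_⟩
    have e : r + (m % n + n - r % n) = m % n + n * (r / n) + n := by omega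
    rw [e, Nat.add_mod_right, Nat.add_mul_mod_self_left, Nat.mod_mod_of_dvd _ dvd_rfl]

lemma gamma_arcSet {c : ℕ} {hc : 2 ≤ c} {l : List ℕ}
    (hg : IsGammaCycle (Gg c hc) Γps l) : arcSetOf l = arcSetOf (Dl c) := by
  obtain ⟨r, hr, h0, hlen, H⟩ := gamma_classify hg
  have hcpos : 0 < c := by omega
  ext p
  simp only [arcSetOf, Finset.mem_image, Finset.mem_range, hlen, length_Dl]
  constructor
  · rintro ⟨m, hm, rfl⟩
    obtain ⟨k, hk, hmod⟩ := shift_surj hcpos r m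
    refine ⟨k, hk, ?_⟩
    have e1 : cyc (Dl c) k = cyc l m := by
      rw [cyc_Dl hc, ← H k]
      apply cyc_congr
      rw [hlen]
      exact hmod
    have e2 : cyc (Dl c) (k + 1) = cyc l (m + 1) := by
      rw [cyc_Dl hc, ← H (k + 1), ← Nat.add_assoc]
      apply cyc_congr
      rw [hlen]
      exact Nat.ModEq.add_right 1 hmod
    rw [e1, e2]
  · rintro ⟨k, hk, rfl⟩
    refine ⟨(r + k) % c, Nat.mod_lt _ hcpos, ?_⟩
    have e1 : cyc l ((r + k) % c) = cyc (Dl c) k := by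
      rw [cyc_Dl hc, ← H k]
      apply cyc_congr
      rw [hlen]
      exact Nat.mod_mod_of_dvd _ dvd_rfl
    have e2 : cyc l ((r + k) % c + 1) = cyc (Dl c) (k + 1) := by
      rw [cyc_Dl hc, ← H (k + 1), ← Nat.add_assoc]
      apply cyc_congr
      rw [hlen]
      have h2 : ((r + k) % c + 1) % c = (r + k + 1) % c :=
        Nat.ModEq.add_right 1 (Nat.mod_modEq (r + k) c)
      exact h2
    rw [e1, e2]

/-! #### Canonical cycles -/

lemma cyc_zero_headI {l : List ℕ} (hne : l ≠ []) : cyc l 0 = l.headI := by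
  cases l with
  | nil => exact absurd rfl hne
  | cons a t => simp [cyc]

lemma canon_classify {c : ℕ} {hc : 2 ≤ c} {l : List ℕ} (h : IsCycle (Gg c hc) l)
    (hcan : IsCanon l) : l = Dl c ∨ ∃ j < c - 1, l = Bl c j := by
  obtain ⟨r, hr, h0, hcase⟩ := classify h
  have hlen2 : 2 ≤ l.length := h.1
  have hne : l ≠ [] := by intro e; rw [e] at hlen2; simp at hlen2
  have hmem0 : (0 : ℕ) ∈ l := h0 ▸ cyc_mem hne r
  have hhead : l.headI = 0 := Nat.le_zero.mp (hcan 0 hmem0)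
  have hcyc0 : cyc l 0 = 0 := by rw [cyc_zero_headI hne, hhead]
  have hr0 : r = 0 := cyc_inj h.2.1 hr (by omega) (h0.trans hcyc0.symm)
  subst hr0
  rcases hcase with ⟨hlen, H⟩ | ⟨j, hj, hlen, H⟩
  · left
    apply List.ext_getElem (by rw [hlen, length_Dl])
    intro i h1 h2
    rw [length_Dl] at h2
    have e1 : l[i] = cyc l i := (cyc_eq_getElem h1).symm
    have e2 : cyc l i = i := by
      have := H i
      rw [Nat.zero_add] at this
      rw [this, Nat.mod_eq_of_lt h2]
    rw [e1, e2]
    simp [Dl]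
  · right
    refine ⟨j, hj, ?_⟩
    apply List.ext_getElem (by rw [hlen, length_Bl])
    intro i h1 h2
    rw [length_Bl] at h2
    have e1 : l[i] = cyc l i := (cyc_eq_getElem h1).symm
    have e2 : cyc l i = cyc (Bl c j) i := by
      have := H i
      rw [Nat.zero_add] at this
      exact this
    rw [e1, e2, cyc_eq_getElem (by rw [length_Bl]; omega)]

lemma Dl_canon {c : ℕ} (hc : 2 ≤ c) : IsCanon (Dl c) := by
  intro v hv
  obtain ⟨c', rfl⟩ : ∃ c', c = c' + 1 := ⟨c - 1, by omega⟩
  rw [Dl, List.range_succ_eq_map]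
  simp

lemma Bl_canon {c j : ℕ} : IsCanon (Bl c j) := by
  intro v hv
  simp [Bl]

/-! #### The set `𝒳` -/

/-- The set `𝒳` as an explicit finset. -/
noncomputable def XF (c : ℕ) : Finset (List ℕ) :=
  insert (Dl c) ((Finset.range (c - 1)).image (Bl c))

lemma Bl_ne_Dl {c : ℕ} (hc : 2 ≤ c) (j : ℕ) : Bl c j ≠ Dl c := by
  intro e
  have h := congrArg (fun t : List ℕ => t.getD 1 0) e
  simp only [Bl, Dl] at h
  have hlt : 1 < (List.range c).length := by simpa using (by omega : 1 < c)
  have h2 : (List.range c).getD 1 0 = 1 := by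
    rw [List.getD_eq_getElem _ _ hlt]; simp
  rw [h2] at h
  simp at h
  omega

lemma XCond_set {c : ℕ} (hc : 2 ≤ c) :
    {l | XCond (Gg c hc) ⊤ (tverts c) l} = ↑(XF c) := by
  ext l
  simp only [Set.mem_setOf_eq, XF, Finset.coe_insert, Set.mem_insert_iff,
    Finset.coe_image, Set.mem_image, Finset.mem_coe, Finset.mem_range]
  constructor
  · rintro ⟨hcyc, -, -, -, hcan⟩
    rcases canon_classify hcyc hcan with e | ⟨j, hj, e⟩
    · exact Or.inl e
    · exact Or.inr ⟨j, hj, e.symm⟩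
  · rintro (rfl | ⟨j, hj, rfl⟩)
    · exact ⟨Dl_cycle hc, fun v hv => (Dl_cycle hc).2.2.1 v hv, Dl_intl hc, le_top,
        Dl_canon hc⟩
    · exact ⟨Bl_cycle hc hj, fun v hv => (Bl_cycle hc hj).2.2.1 v hv, Bl_intl hc hj,
        le_top, Bl_canon⟩

lemma XF_toFinset {c : ℕ} (hc : 2 ≤ c) :
    (XCond_finite (Gg c hc) ⊤ (tverts c)).toFinset = XF c := by
  apply Finset.coe_injective
  rw [Set.Finite.coe_toFinset, XCond_set hc]

lemma Dl_notmem_image {c : ℕ} (hc : 2 ≤ c) :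
    Dl c ∉ (Finset.range (c - 1)).image (Bl c) := by
  intro h
  obtain ⟨j, -, e⟩ := Finset.mem_image.mp h
  exact Bl_ne_Dl hc j e

lemma XF_card {c : ℕ} (hc : 2 ≤ c) : (XF c).card = c := by
  rw [XF, Finset.card_insert_of_notMem (Dl_notmem_image hc),
    Finset.card_image_of_injective _ (fun a b hab => by
      have := congrArg (fun t : List ℕ => t.getD 1 0) hab
      simp [Bl] at this
      omega)]
  rw [Finset.card_range]
  omega

lemma zero_mem_XF {c : ℕ} (hc : 2 ≤ c) {x : List ℕ} (hx : x ∈ XF c) : (0 : ℕ) ∈ x := by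
  rw [XF, Finset.mem_insert] at hx
  rcases hx with rfl | hx
  · simp [Dl]; omega
  · obtain ⟨j, -, rfl⟩ := Finset.mem_image.mp hx
    simp [Bl]

/-! #### Pre-selection is empty -/

lemma natpack_empty {c : ℕ} (hc : 2 ≤ c) {P : Finset (List ℕ)}
    (h : IsNatPacking (Gg c hc) Γps.ncl P) : P = ∅ := by
  by_contra hne
  obtain ⟨l, hl⟩ := Finset.nonempty_of_ne_empty hne
  obtain ⟨i, -, hlen⟩ := h.2 l hl
  have h2 := (h.1.1 l hl).1
  have : Γps.ncl i = 0 := rfl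
  rw [this] at hlen
  have : (l.length : ℕ∞) = 0 := le_antisymm hlen (zero_le)
  rw [Nat.cast_eq_zero] at this
  omega

lemma sel_empty {c : ℕ} (hc : 2 ≤ c) (σ : PreSelection) :
    σ.sel 3 (Gg c hc) Γps.ncl = ∅ :=
  natpack_empty hc (σ.isMax 3 (Gg c hc) Γps.ncl).1

/-! #### Substitute lists are empty for bad cycles -/

lemma subList_B_empty {c : ℕ} (hc : 2 ≤ c) {j : ℕ} (hj : j < c - 1) :
    subList (Gg c hc) Γps (Bl c j) = [] := by
  have hset : {l | SubCond (Gg c hc) Γps (Bl c j) l} = ∅ := by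
    rw [Set.eq_empty_iff_forall_notMem]
    rintro l ⟨hg, -, hsub, -, -⟩
    have h1 : (1 : ℕ) ∈ l := gamma_one_mem hg
    have := hsub 1 h1
    simp [Bl] at this
    omega
  show (SubCond_finite (Gg c hc) Γps (Bl c j)).toFinset.toList = []
  have : (SubCond_finite (Gg c hc) Γps (Bl c j)).toFinset = ∅ := by
    apply Finset.coe_injective
    rw [Set.Finite.coe_toFinset, hset]
    simp
  rw [this, Finset.toList_empty]

/-! #### Greedy and `stepExp` evaluation -/

lemma greedy_singleton {h : List ℕ} (h0 : (0 : ℕ) ∈ h) :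
    ∀ t : List (List ℕ), (∀ x ∈ t, (0 : ℕ) ∈ x) → greedy [h] t = [h] := by
  intro t
  induction t with
  | nil => intro _; rfl
  | cons a t ih =>
    intro hall
    rw [greedy, if_neg]
    · exact ih (fun x hx => hall x (List.mem_cons_of_mem a hx))
    · intro hd
      exact hd h (List.mem_singleton_self h) 0 (hall a List.mem_cons_self) h0

lemma greedy_head {ord : List (List ℕ)} (hne : ord ≠ [])
    (h0 : ∀ x ∈ ord, (0 : ℕ) ∈ x) : greedy [] ord = [ord.headI] := by
  cases ord with
  | nil => exact absurd rfl hne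
  | cons h t =>
    have hd : DisjFrom [] h := fun a ha => absurd ha List.not_mem_nil
    rw [List.headI_cons, greedy, if_pos hd]
    exact greedy_singleton (h0 h List.mem_cons_self) t
      (fun x hx => h0 x (List.mem_cons_of_mem h hx))

lemma step_D {c : ℕ} (hc : 2 ≤ c) (f : Finset (List ℕ) → ℝ) :
    stepExp (Gg c hc) Γps f [Dl c] ∅ = f {Dl c} := by
  rw [stepExp, if_pos (Dl_gamma hc)]
  rfl

lemma step_B {c : ℕ} (hc : 2 ≤ c) {j : ℕ} (hj : j < c - 1) (f : Finset (List ℕ) → ℝ) :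
    stepExp (Gg c hc) Γps f [Bl c j] ∅ = f ∅ := by
  rw [stepExp, if_neg (Bl_not_gamma hc hj), if_neg (by rw [subList_B_empty hc hj]; simp)]
  rfl

/-! #### Summation over permutations -/

lemma sum_map_add_const {α : Type*} (L : List α) (x : ℝ) (h : α → ℝ) :
    (L.map fun q => x + h q).sum = L.length * x + (L.map h).sum := by
  induction L with
  | nil => simp
  | cons a t ih => simp [ih]; ring

lemma sum_map_mul_left' {α : Type*} (L : List α) (r : ℝ) (h : α → ℝ) :
    (L.map fun q => r * h q).sum = r * (L.map h).sum := by
  induction L with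
  | nil => simp
  | cons a t ih => simp [ih]; ring

lemma sum_map_const_real {α : Type*} (L : List α) (r : ℝ) :
    (L.map fun _ => r).sum = L.length * r := by
  induction L with
  | nil => simp
  | cons a t ih => simp [ih]; ring

lemma permAux_sum {α : Type*} [Inhabited α] (g : α → ℝ) (a : α) (q : List α) :
    ((List.permutations'Aux a q).map (fun p => g p.headI)).sum
      = g a + q.length * g q.headI := by
  cases q with
  | nil => simp [List.permutations'Aux]
  | cons b t =>
    rw [List.permutations'Aux]
    simp only [List.map_cons, List.headI_cons, List.map_map, List.sum_cons]
    have hcomp : ((fun p => g p.headI) ∘ (List.cons b)) = fun _ => g b := by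
      funext p; simp
    rw [hcomp, sum_map_const_real, List.length_permutations'Aux]
    simp only [List.length_cons]
    try push_cast
    try ring

lemma perm'_sum {α : Type*} [Inhabited α] (g : α → ℝ) :
    ∀ (t : List α) (a : α),
      (((a :: t).permutations').map (fun p => g p.headI)).sum
        = (t.length)! * (g a + (t.map g).sum) := by
  intro t
  induction t with
  | nil => intro a; simp [List.permutations']
  | cons b t' ih =>
    intro a
    have hperm : (a :: b :: t').permutations'
        = ((b :: t').permutations').flatMap (List.permutations'Aux a) := rfl
    rw [hperm]
    have hflat : ∀ (L : List (List α)),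
        ((L.flatMap (List.permutations'Aux a)).map (fun p => g p.headI)).sum
          = (L.map (fun q => ((List.permutations'Aux a q).map (fun p => g p.headI)).sum)).sum := by
      intro L
      induction L with
      | nil => simp
      | cons u v ihL => simp [ihL]
    rw [hflat]
    have hcongr : ((b :: t').permutations').map
          (fun q => ((List.permutations'Aux a q).map (fun p => g p.headI)).sum)
        = ((b :: t').permutations').map
          (fun q => g a + (t'.length + 1) * g q.headI) := by
      apply List.map_congr_left
      intro q hq
      rw [permAux_sum]
      have : q.length = t'.length + 1 := by
        have := (List.mem_permutations'.mp hq).length_eq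
        simpa using this
      rw [this]
      push_cast
      ring
    rw [hcongr, sum_map_add_const]
    have hlp : ((b :: t').permutations').length = (t'.length + 1)! := by
      have e1 := (List.permutations_perm_permutations' (b :: t')).length_eq
      rw [← e1, List.length_permutations]
      simp
    have e2 : (((b :: t').permutations').map
          (fun q => (t'.length + 1 : ℝ) * g q.headI)).sum
        = (t'.length + 1 : ℝ) * (((b :: t').permutations').map (fun q => g q.headI)).sum := by
      exact sum_map_mul_left' _ _ _
    rw [e2, ih b, hlp]
    simp only [List.map_cons, List.sum_cons, List.length_cons]
    rw [Nat.factorial_succ]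
    push_cast
    ring

lemma sum_map_ite_nodup {α : Type*} [DecidableEq α] {a : α} {L : List α}
    (hnd : L.Nodup) (ha : a ∈ L) (r : ℝ) :
    (L.map fun x => if x = a then r else 0).sum = r := by
  induction L with
  | nil => simp at ha
  | cons b t ih =>
    by_cases hb : b = a
    · subst hb
      simp only [List.map_cons, List.sum_cons, if_pos rfl]
      have hz : ∀ x ∈ t, (if x = b then r else 0) = (fun _ => (0:ℝ)) x := by
        intro x hx
        rw [if_neg]
        intro e
        subst e
        exact (List.nodup_cons.mp hnd).1 hx
      rw [List.map_congr_left hz]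
      simp
    · have ha' : a ∈ t := by
        rcases List.mem_cons.mp ha with h | h
        · exact absurd h.symm hb
        · exact h
      simp only [List.map_cons, List.sum_cons, if_neg hb]
      rw [ih (List.nodup_cons.mp hnd).2 ha']
      ring

/-! #### Instance-level lemmas -/

@[simp] lemma Ii_G {c : ℕ} {hc : 2 ≤ c} : (Ii c hc).G = Gg c hc := rfl
@[simp] lemma Ii_prm {c : ℕ} {hc : 2 ≤ c} : (Ii c hc).prm = Γps := rfl
@[simp] lemma Ii_n {c : ℕ} {hc : 2 ≤ c} : (Ii c hc).n = 3 := rfl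

lemma intl_Dl {c : ℕ} (hc : 2 ≤ c) : IsIntlGammaCycle (Ii c hc) (Dl c) :=
  ⟨Dl_gamma hc, Dl_intl hc⟩

lemma zero_mem_Dl {c : ℕ} (hc : 2 ≤ c) : (0 : ℕ) ∈ Dl c := by
  simp [Dl]; omega

lemma cInt_eq {c : ℕ} (hc : 2 ≤ c) : cInt (Ii c hc) = c := by
  have hset : {s | ∃ l, IsIntlGammaCycle (Ii c hc) l ∧ l.length = s} = {c} := by
    ext s
    simp only [Set.mem_setOf_eq, Set.mem_singleton_iff]
    constructor
    · rintro ⟨l, ⟨hg, -⟩, rfl⟩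
      exact gamma_len (hc := hc) hg
    · rintro rfl
      exact ⟨Dl _, intl_Dl hc, length_Dl _⟩
  rw [cInt, hset, csSup_singleton]

lemma intlDeg_eq_one {c : ℕ} (hc : 2 ≤ c) {C : List ℕ}
    (hC : IsIntlGammaCycle (Ii c hc) C) : intlDeg (Ii c hc) C = 1 := by
  have h0C : (0 : ℕ) ∈ C := zero_mem_of_cycle (hc := hc) hC.1.1
  have hset : {S : Finset (ℕ × ℕ) | ∃ l, IsIntlGammaCycle (Ii c hc) l ∧ arcSetOf l = S ∧
      ∃ v ∈ l, v ∈ C} = {arcSetOf (Dl c)} := by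
    ext S
    simp only [Set.mem_setOf_eq, Set.mem_singleton_iff]
    constructor
    · rintro ⟨l, ⟨hg, -⟩, rfl, -⟩
      exact gamma_arcSet (hc := hc) hg
    · rintro rfl
      exact ⟨Dl c, intl_Dl hc, rfl, 0, zero_mem_Dl hc, h0C⟩
  rw [intlDeg, hset, Set.ncard_singleton]

lemma dStar_eq {c : ℕ} (hc : 2 ≤ c) : dStar (Ii c hc) = 1 := by
  have hset : {d | ∃ C, IsIntlGammaCycle (Ii c hc) C ∧ intlDeg (Ii c hc) C = d} = {1} := by
    ext d
    simp only [Set.mem_setOf_eq, Set.mem_singleton_iff]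
    constructor
    · rintro ⟨C, hC, rfl⟩
      exact intlDeg_eq_one hc hC
    · rintro rfl
      exact ⟨Dl c, intl_Dl hc, intlDeg_eq_one hc (intl_Dl hc)⟩
  rw [dStar, hset, csSup_singleton]

lemma packing_Dl {c : ℕ} (hc : 2 ≤ c) : IsGammaPacking (Ii c hc) {Dl c} := by
  refine ⟨⟨?_, ?_⟩, ?_⟩
  · intro l hl
    rw [Finset.mem_singleton] at hl
    subst hl
    exact Dl_cycle hc
  · intro l hl l' hl' hne
    rw [Finset.mem_singleton] at hl hl'
    exact absurd (hl.trans hl'.symm) hne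
  · intro l hl
    rw [Finset.mem_singleton] at hl
    subst hl
    exact Dl_gamma hc

lemma optSize_eq {c : ℕ} (hc : 2 ≤ c) : optSize (Ii c hc) = c := by
  have hmemc : c ∈ {m | ∃ P, IsGammaPacking (Ii c hc) P ∧ packSize P = m} :=
    ⟨{Dl c}, packing_Dl hc, by simp [packSize]⟩
  have hub : ∀ m ∈ {m | ∃ P, IsGammaPacking (Ii c hc) P ∧ packSize P = m}, m ≤ c := by
    rintro m ⟨P, hP, rfl⟩
    rcases P.eq_empty_or_nonempty with rfl | ⟨l, hl⟩
    · simp [packSize]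
    · have huniq : ∀ x ∈ P, x = l := by
        intro x hx
        by_contra hne
        exact hP.1.2 x hx l hl hne 0 (zero_mem_of_cycle (hc := hc) (hP.1.1 x hx))
          (zero_mem_of_cycle (hc := hc) (hP.1.1 l hl))
      have hPl : P = {l} := Finset.eq_singleton_iff_unique_mem.mpr ⟨hl, huniq⟩
      subst hPl
      have : packSize {l} = l.length := by simp [packSize]
      rw [this, gamma_len (hc := hc) (hP.2 l hl)]
  rw [optSize]
  exact le_antisymm (csSup_le ⟨c, hmemc⟩ hub) (le_csSup ⟨c, hub⟩ hmemc)

/-! #### Expected social welfare of the mechanism -/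

/-- The value of a run of the mechanism as a function of the first cycle. -/
noncomputable def gD (c : ℕ) : List ℕ → ℝ := fun x => if x = Dl c then (c : ℝ) else 0

lemma step_val {c : ℕ} (hc : 2 ≤ c) {ord : List (List ℕ)}
    (hperm : List.Perm ord ((XF c).toList)) :
    stepExp (Gg c hc) Γps (fun P => (packSize P : ℝ)) (greedy [] ord) ∅
      = gD c ord.headI := by
  have hmem : ∀ x ∈ ord, x ∈ XF c := fun x hx => Finset.mem_toList.mp (hperm.subset hx)
  have hne : ord ≠ [] := by
    intro e
    have hlen := hperm.length_eq
    rw [e, Finset.length_toList, XF_card hc] at hlen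
    simp at hlen
    omega
  rw [greedy_head hne (fun x hx => zero_mem_XF hc (hmem x hx))]
  cases ord with
  | nil => exact absurd rfl hne
  | cons h t =>
    rw [List.headI_cons]
    have hh : h ∈ XF c := hmem h List.mem_cons_self
    rw [XF, Finset.mem_insert] at hh
    rcases hh with rfl | hh
    · rw [step_D hc, gD, if_pos rfl]
      simp [packSize]
    · obtain ⟨j, hj, rfl⟩ := Finset.mem_image.mp hh
      rw [Finset.mem_range] at hj
      rw [step_B hc hj, gD, if_neg (Bl_ne_Dl hc j)]
      simp [packSize]

lemma final_sum {c : ℕ} (hc : 2 ≤ c) (XL : List (List ℕ))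
    (hlenXL : XL.length = c) (hmapsum : (XL.map (gD c)).sum = (c : ℝ)) :
    (XL.permutations'.map (fun p : List (List ℕ) => gD c p.headI)).sum
      / (XL.permutations.length : ℝ) = 1 := by
  cases XL with
  | nil => simp at hlenXL; omega
  | cons x t =>
    have htlen : t.length = c - 1 := by
      rw [List.length_cons] at hlenXL
      omega
    rw [perm'_sum (gD c) t x, List.length_permutations, List.length_cons, htlen]
    have e1 : gD c x + (t.map (gD c)).sum = (c : ℝ) := by
      rw [← hmapsum]
      simp
    rw [e1]
    have e2 : (c - 1 + 1) = c := by omega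
    rw [e2]
    have hfac : (c ! : ℝ) = (c : ℝ) * ((c - 1)! : ℝ) := by
      rw [← Nat.mul_factorial_pred (by omega : c ≠ 0)]
      push_cast
      ring
    rw [hfac]
    have hne1 : ((c - 1)! : ℝ) ≠ 0 := by
      exact_mod_cast Nat.factorial_ne_zero (c - 1)
    have hne2 : (c : ℝ) ≠ 0 := by
      exact_mod_cast (by omega : c ≠ 0)
    field_simp

lemma sw_eq {c : ℕ} (hc : 2 ≤ c) (σ : PreSelection) : MorderSW σ (Ii c hc) = 1 := by
  have hsel : σ.sel (Ii c hc).n (Ii c hc).G (Ii c hc).prm.ncl = ∅ := sel_empty hc σ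
  rw [MorderSW, MorderExp, hsel, MorderExpFrom]
  simp only [Finset.biUnion_empty, Finset.sdiff_empty, Ii_G, Ii_prm]
  have hXL : XList (Gg c hc) Γps.icl (Gg c hc).verts = (XF c).toList := by
    show (XCond_finite (Gg c hc) ⊤ (tverts c)).toFinset.toList = _
    rw [XF_toFinset hc]
  show ((XList (Gg c hc) Γps.icl (Gg c hc).verts).permutations.map fun ord =>
      stepExp (Gg c hc) Γps (fun P => (packSize P : ℝ)) (greedy [] ord) ∅).sum /
      ((XList (Gg c hc) Γps.icl (Gg c hc).verts).permutations.length : ℝ) = 1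
  rw [hXL]
  have hlenXL : ((XF c).toList).length = c := by rw [Finset.length_toList, XF_card hc]
  have hval : ∀ ord ∈ ((XF c).toList).permutations,
      stepExp (Gg c hc) Γps (fun P => (packSize P : ℝ)) (greedy [] ord) ∅
        = (fun p : List (List ℕ) => gD c p.headI) ord := by
    intro ord hord
    exact step_val hc (List.mem_permutations.mp hord)
  rw [List.map_congr_left hval]
  have hps : ((((XF c).toList).permutations).map fun p : List (List ℕ) => gD c p.headI).sum
      = ((((XF c).toList).permutations').map fun p : List (List ℕ) => gD c p.headI).sum :=
    ((List.permutations_perm_permutations' ((XF c).toList)).map _).sum_eq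
  rw [hps]
  have hmapsum : (((XF c).toList).map (gD c)).sum = (c : ℝ) := by
    exact sum_map_ite_nodup (Finset.nodup_toList _)
      (Finset.mem_toList.mpr (Finset.mem_insert_self _ _)) (c : ℝ)
  exact final_sum hc _ hlenXL hmapsum

end TightCons

/-- The bound `max {c_int, d*}` on the approximation ratio of
`ℳ_order` is tight: for every integer `c ≥ 2` there is an instance `I` with an
international `Γ`-cycle and `max {c_int(I), d*(I)} = c` on which
`opt(I) = c · SW(ℳ_order(I))` for every pre-selection function `σ`. -/
theorem Morder_approximation_ratio_tight (c : ℕ) (hc : 2 ≤ c) :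
    ∃ I : IKEP, (∃ l, IsIntlGammaCycle I l) ∧ max (cInt I) (dStar I) = c ∧
      ∀ σ : PreSelection, (optSize I : ℝ) = (c : ℝ) * MorderSW σ I := by
  refine ⟨TightCons.Ii c hc, ⟨TightCons.Dl c, TightCons.intl_Dl hc⟩, ?_, ?_⟩
  · rw [TightCons.cInt_eq hc, TightCons.dStar_eq hc]
    exact max_eq_left (by omega)
  · intro σ
    rw [TightCons.optSize_eq hc, TightCons.sw_eq hc σ, mul_one]
end
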